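/- arXiv:1908.06591 — 9 statements merged into one kernel-verified Lean document; each statement's English description precedes it below -/
import Mathlib

section
/- For each integer k ≥ 1 there exists a constant C_k > 0 such that for every integer n ≥ 1, E[|u_n|^k] ≤ C_k n^{−k/4}, where u_n = −log X_n + (1/2) log n and X_n has the Gamma distribution of shape √n + 1/2 and rate 1. -/
open MeasureTheory ProbabilityTheory Real
open scoped ENNReal


lemma measurable_gammaPDF' (a r : ℝ) : Measurable (gammaPDF a r) :=
  (measurable_gammaPDFReal a r).ennreal_ofReal

lemma gamma_transfer {a b r c : ℝ} (ha : 0 < a) (hb : 0 < b) (hr : 0 < r)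
    {g : ℝ → ℝ} (hg : Measurable g) (hc : 0 ≤ c)
    (heq : ∀ x : ℝ, 0 < x → gammaPDFReal a 1 x * g x = c * gammaPDFReal b r x) :
    ∫⁻ x, ENNReal.ofReal (g x) ∂(gammaMeasure a 1) = ENNReal.ofReal c := by
  rw [gammaMeasure, lintegral_withDensity_eq_lintegral_mul _ (measurable_gammaPDF' a 1)
    hg.ennreal_ofReal]
  have hae : ∀ᵐ x : ℝ, x ≠ 0 := by
    rw [ae_iff]; simpa using (by simp : {x : ℝ | ¬ x ≠ 0} = {0}) ▸ Real.volume_singleton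
  have hcong : (fun x => (gammaPDF a 1 * fun x => ENNReal.ofReal (g x)) x)
      =ᵐ[volume] fun x => ENNReal.ofReal c * gammaPDF b r x := by
    filter_upwards [hae] with x hx
    rcases lt_or_gt_of_ne hx with hneg | hpos
    · simp [gammaPDF_of_neg hneg, gammaPDF_of_neg (r := r) (a := b) hneg]
    · have h1 : gammaPDFReal a 1 x * g x = c * gammaPDFReal b r x := heq x hpos
      simp only [Pi.mul_apply, gammaPDF]
      rw [← ENNReal.ofReal_mul (gammaPDFReal_nonneg ha one_pos x),
        ← ENNReal.ofReal_mul hc, h1]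
  rw [lintegral_congr_ae hcong, lintegral_const_mul _ (measurable_gammaPDF' b r),
    lintegral_gammaPDF_eq_one hb hr, mul_one]
lemma Gamma_prod (a : ℝ) (ha : 0 < a) (j : ℕ) :
    Real.Gamma (a + j) = Real.Gamma a * ∏ i ∈ Finset.range j, (a + i) := by
  induction j with
  | zero => simp
  | succ n ih =>
    have h1 : a + (n+1 : ℕ) = (a + n) + 1 := by push_cast; ring
    rw [h1, Real.Gamma_add_one (by positivity), ih, Finset.prod_range_succ]
    push_cast; ring

lemma gammaPDFReal_of_pos {a r x : ℝ} (hx : 0 < x) :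
    gammaPDFReal a r x = r ^ a / Real.Gamma a * x ^ (a-1) * Real.exp (-(r * x)) := by
  simp [gammaPDFReal, hx.le]

-- exp moment
lemma lintegral_exp_gamma {a l : ℝ} (ha : 0 < a) (hl : l < 1) :
    ∫⁻ x, ENNReal.ofReal (Real.exp (l * x)) ∂(gammaMeasure a 1)
      = ENNReal.ofReal ((1 - l) ^ (-a)) := by
  have h1l : (0:ℝ) < 1 - l := by linarith
  refine gamma_transfer (b := a) (r := 1 - l) ha ha h1l (by fun_prop) (by positivity)
    (fun x hx => ?_)
  rw [gammaPDFReal_of_pos hx, gammaPDFReal_of_pos hx, Real.one_rpow]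
  have key : (1 - l) ^ (-a) * (1-l) ^ a = 1 := by
    rw [← Real.rpow_add h1l]; simp
  have hexp : Real.exp (-(1*x)) * Real.exp (l * x) = Real.exp (-((1-l)*x)) := by
    rw [← Real.exp_add]; ring_nf
  calc 1 / Real.Gamma a * x ^ (a-1) * Real.exp (-(1*x)) * Real.exp (l*x)
      = (Real.exp (-(1*x)) * Real.exp (l*x)) * (1 / Real.Gamma a * x ^ (a-1)) := by ring
    _ = Real.exp (-((1-l)*x)) * (1 / Real.Gamma a * x ^ (a-1)) := by rw [hexp]
    _ = ((1-l) ^ (-a) * (1-l) ^ a) * (1 / Real.Gamma a * x ^ (a-1)) * Real.exp (-((1-l)*x)) := by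
        rw [key]; ring
    _ = (1-l) ^ (-a) * ((1-l) ^ a / Real.Gamma a * x ^ (a-1) * Real.exp (-((1-l)*x))) := by ring

-- positive nat moments
lemma lintegral_pow_gamma {a : ℝ} (ha : 0 < a) (j : ℕ) :
    ∫⁻ x, ENNReal.ofReal (x ^ j) ∂(gammaMeasure a 1)
      = ENNReal.ofReal (Real.Gamma (a + j) / Real.Gamma a) := by
  have hga : 0 < Real.Gamma a := Real.Gamma_pos_of_pos ha
  have hgaj : 0 < Real.Gamma (a + j) := Real.Gamma_pos_of_pos (by positivity)
  refine gamma_transfer (b := a + j) (r := 1) ha (by positivity) one_pos (by fun_prop)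
    (by positivity) (fun x hx => ?_)
  rw [gammaPDFReal_of_pos hx, gammaPDFReal_of_pos hx, Real.one_rpow, Real.one_rpow]
  have hxj : x ^ (a-1) * (x:ℝ) ^ j = x ^ (a + j - 1) := by
    rw [← Real.rpow_natCast x j, ← Real.rpow_add hx]; ring_nf
  calc 1 / Real.Gamma a * x ^ (a-1) * Real.exp (-(1*x)) * x ^ j
      = (x ^ (a-1) * (x:ℝ) ^ j) * Real.exp (-(1*x)) / Real.Gamma a := by ring
    _ = x ^ (a + j - 1) * Real.exp (-(1*x)) / Real.Gamma a := by rw [hxj]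
    _ = Real.Gamma (a+j) / Real.Gamma a * (1 / Real.Gamma (a+j) * x ^ (a+j-1)
          * Real.exp (-(1*x))) := by field_simp

-- negative nat moments
lemma lintegral_inv_pow_gamma {a : ℝ} (ha : 0 < a) (j : ℕ) (haj : (j:ℝ) < a) :
    ∫⁻ x, ENNReal.ofReal ((x ^ j)⁻¹) ∂(gammaMeasure a 1)
      = ENNReal.ofReal (Real.Gamma (a - j) / Real.Gamma a) := by
  have hga : 0 < Real.Gamma a := Real.Gamma_pos_of_pos ha
  have hgaj : 0 < Real.Gamma (a - j) := Real.Gamma_pos_of_pos (by linarith)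
  refine gamma_transfer (b := a - j) (r := 1) ha (by linarith) one_pos (by fun_prop)
    (by positivity) (fun x hx => ?_)
  rw [gammaPDFReal_of_pos hx, gammaPDFReal_of_pos hx, Real.one_rpow, Real.one_rpow]
  have hxj : x ^ (a-1) * ((x:ℝ) ^ j)⁻¹ = x ^ (a - j - 1) := by
    rw [← Real.rpow_natCast x j, ← Real.rpow_neg hx.le, ← Real.rpow_add hx]; ring_nf
  calc 1 / Real.Gamma a * x ^ (a-1) * Real.exp (-(1*x)) * ((x:ℝ)^j)⁻¹
      = (x ^ (a-1) * ((x:ℝ) ^ j)⁻¹) * Real.exp (-(1*x)) / Real.Gamma a := by ring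
    _ = x ^ (a - j - 1) * Real.exp (-(1*x)) / Real.Gamma a := by rw [hxj]
    _ = Real.Gamma (a-j) / Real.Gamma a * (1 / Real.Gamma (a-j) * x ^ (a-j-1)
          * Real.exp (-(1*x))) := by field_simp
lemma mgf_bound_pos {l a : ℝ} (hl0 : 0 < l) (hl : l ≤ 1/2) (ha : 0 < a) :
    (1 - l) ^ (-a) ≤ Real.exp (a * (l + 2*l^2)) := by
  have h1l : (0:ℝ) < 1 - l := by linarith
  rw [Real.rpow_def_of_pos h1l, Real.exp_le_exp]
  have hlog : -(l + 2*l^2) ≤ Real.log (1 - l) := by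
    rw [Real.le_log_iff_exp_le h1l]
    have h2 := Real.add_one_le_exp (l + 2*l^2)
    have h3 := Real.exp_pos (l + 2*l^2)
    have h4 : Real.exp (l + 2*l^2) * Real.exp (-(l + 2*l^2)) = 1 := by
      rw [← Real.exp_add]; simp
    nlinarith [sq_nonneg l, mul_pos h3 (Real.exp_pos (-(l + 2*l^2)))]
  nlinarith [hlog]

lemma mgf_bound_neg {l a : ℝ} (hl0 : 0 < l) (hl : l ≤ 1/2) (ha : 0 < a) :
    (1 + l) ^ (-a) ≤ Real.exp (a * (-l + 2*l^2)) := by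
  have h1l : (0:ℝ) < 1 + l := by linarith
  rw [Real.rpow_def_of_pos h1l, Real.exp_le_exp]
  have hlog : l - 2*l^2 ≤ Real.log (1 + l) := by
    rw [Real.le_log_iff_exp_le h1l]
    have h2 := Real.add_one_le_exp (-(l - 2*l^2))
    have h3 := Real.exp_pos (-(l - 2*l^2))
    have h4 : Real.exp (l - 2*l^2) * Real.exp (-(l - 2*l^2)) = 1 := by
      rw [← Real.exp_add]; simp
    nlinarith [sq_nonneg l, mul_pos (Real.exp_pos (l - 2*l^2)) h3]
  nlinarith [hlog]

lemma lintegral_exp_shift {a : ℝ} (ha : 4 ≤ a) {e : ℝ} (he : e = 1 ∨ e = -1) :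
    ∫⁻ x, ENNReal.ofReal (Real.exp (e * (Real.sqrt a)⁻¹ * (x - a))) ∂(gammaMeasure a 1)
      ≤ ENNReal.ofReal (Real.exp 2) := by
  have ha0 : (0:ℝ) < a := by linarith
  have hsa : (2:ℝ) ≤ Real.sqrt a := by
    rw [show (2:ℝ) = Real.sqrt 4 by rw [show (4:ℝ) = 2^2 by norm_num, Real.sqrt_sq]; norm_num]
    exact Real.sqrt_le_sqrt ha
  have hsa0 : (0:ℝ) < Real.sqrt a := by linarith
  set m : ℝ := (Real.sqrt a)⁻¹ with hm
  have hm0 : 0 < m := by positivity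
  have hm2 : m ≤ 1/2 := by
    rw [hm]
    rw [inv_le_comm₀ hsa0 (by norm_num)]
    linarith
  have hmsq : m^2 = a⁻¹ := by
    rw [hm, ← Real.sq_sqrt ha0.le]; field_simp; rw [Real.sqrt_sq (Real.sqrt_nonneg _)]
  have key : ∀ l : ℝ, l < 1 → (fun x => ENNReal.ofReal (Real.exp (l * (x - a))))
      = fun x => ENNReal.ofReal (Real.exp (-(l*a))) * ENNReal.ofReal (Real.exp (l * x)) := by
    intro l hl
    funext x
    rw [← ENNReal.ofReal_mul (Real.exp_pos _).le, ← Real.exp_add]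
    ring_nf
  have main : ∀ l : ℝ, l < 1 →
      ∫⁻ x, ENNReal.ofReal (Real.exp (l * (x - a))) ∂(gammaMeasure a 1)
        = ENNReal.ofReal (Real.exp (-(l*a)) * (1 - l) ^ (-a)) := by
    intro l hl
    rw [key l hl, lintegral_const_mul _ (by fun_prop), lintegral_exp_gamma ha0 hl,
      ← ENNReal.ofReal_mul (Real.exp_pos _).le]
  rcases he with rfl | rfl
  · rw [one_mul, main m (by linarith)]
    apply ENNReal.ofReal_le_ofReal
    calc Real.exp (-(m*a)) * (1-m) ^ (-a)
        ≤ Real.exp (-(m*a)) * Real.exp (a * (m + 2*m^2)) :=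
          mul_le_mul_of_nonneg_left (mgf_bound_pos hm0 hm2 ha0) (Real.exp_pos _).le
      _ = Real.exp (2 * (a * m^2)) := by rw [← Real.exp_add]; ring_nf
      _ = Real.exp 2 := by rw [hmsq]; field_simp
  · rw [show (-1 : ℝ) * m = -m by ring, main (-m) (by linarith)]
    apply ENNReal.ofReal_le_ofReal
    have h1 : (1 : ℝ) - -m = 1 + m := by ring
    rw [h1]
    calc Real.exp (-(-m*a)) * (1+m) ^ (-a)
        ≤ Real.exp (-(-m*a)) * Real.exp (a * (-m + 2*m^2)) :=
          mul_le_mul_of_nonneg_left (mgf_bound_neg hm0 hm2 ha0) (Real.exp_pos _).le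
      _ = Real.exp (2 * (a * m^2)) := by rw [← Real.exp_add]; ring_nf
      _ = Real.exp 2 := by rw [hmsq]; field_simp

lemma lintegral_central_moment {a : ℝ} (ha : 4 ≤ a) (m : ℕ) :
    ∫⁻ x, ENNReal.ofReal ((x - a) ^ (2*m)) ∂(gammaMeasure a 1)
      ≤ ENNReal.ofReal ((Nat.factorial (2*m) : ℝ) * a ^ m * (2 * Real.exp 2)) := by
  have ha0 : (0:ℝ) < a := by linarith
  set l : ℝ := (Real.sqrt a)⁻¹ with hl
  have hsa0 : (0:ℝ) < Real.sqrt a := Real.sqrt_pos.mpr ha0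
  have hl0 : 0 < l := by positivity
  have hlsq : l^2 = a⁻¹ := by rw [hl, ← Real.sq_sqrt ha0.le]; field_simp; rw [Real.sqrt_sq (Real.sqrt_nonneg _)]
  have pointwise : ∀ x : ℝ, (x - a) ^ (2*m) ≤
      (Nat.factorial (2*m) : ℝ) * a ^ m * (Real.exp (l * (x-a)) + Real.exp (-1 * l * (x-a))) := by
    intro x
    have ht0 : 0 ≤ l * |x - a| := by positivity
    have h1 : (l * |x-a|) ^ (2*m) / Nat.factorial (2*m) ≤ Real.exp (l * |x-a|) :=
      Real.pow_div_factorial_le_exp _ ht0 (2*m)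
    have h2 : Real.exp (l * |x-a|) ≤ Real.exp (l * (x-a)) + Real.exp (-1 * l * (x-a)) := by
      rcases abs_cases (x - a) with ⟨h, _⟩ | ⟨h, _⟩ <;> rw [h] <;>
        [skip; rw [show l * -(x-a) = -1 * l * (x-a) by ring]] <;>
        nlinarith [Real.exp_pos (l * (x-a)), Real.exp_pos (-1 * l * (x-a))]
    have h3 : (l * |x-a|) ^ (2*m) = a⁻¹^m * (x-a)^(2*m) := by
      rw [mul_pow, pow_mul, pow_mul, sq_abs, hlsq, ← pow_mul]
    have hfac : (0:ℝ) < (Nat.factorial (2*m) : ℝ) := by exact_mod_cast Nat.factorial_pos _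
    have h4 : (x-a)^(2*m) = a^m * (a⁻¹^m * (x-a)^(2*m)) := by
      rw [← mul_assoc, ← mul_pow, mul_inv_cancel₀ ha0.ne', one_pow, one_mul]
    calc (x-a)^(2*m) = a^m * ((l * |x-a|) ^ (2*m)) := by rw [h3]; exact h4
      _ ≤ a^m * ((Nat.factorial (2*m):ℝ) * Real.exp (l * |x-a|)) := by
          apply mul_le_mul_of_nonneg_left _ (by positivity)
          linarith [(div_le_iff₀ hfac).mp h1]
      _ ≤ (Nat.factorial (2*m):ℝ) * a^m * (Real.exp (l * (x-a)) + Real.exp (-1 * l * (x-a))) := by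
          rw [show a^m * ((Nat.factorial (2*m):ℝ) * Real.exp (l * |x-a|))
            = (Nat.factorial (2*m):ℝ) * a^m * Real.exp (l * |x-a|) by ring]
          exact mul_le_mul_of_nonneg_left h2 (by positivity)
  calc ∫⁻ x, ENNReal.ofReal ((x - a) ^ (2*m)) ∂(gammaMeasure a 1)
      ≤ ∫⁻ x, ENNReal.ofReal ((Nat.factorial (2*m):ℝ) * a^m) *
          (ENNReal.ofReal (Real.exp (l * (x-a))) + ENNReal.ofReal (Real.exp (-1 * l * (x-a))))
          ∂(gammaMeasure a 1) := by
        apply lintegral_mono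
        intro x
        dsimp only
        rw [← ENNReal.ofReal_add (Real.exp_pos _).le (Real.exp_pos _).le,
          ← ENNReal.ofReal_mul (by positivity)]
        exact ENNReal.ofReal_le_ofReal (pointwise x)
    _ = ENNReal.ofReal ((Nat.factorial (2*m):ℝ) * a^m) *
        ((∫⁻ x, ENNReal.ofReal (Real.exp (l * (x-a))) ∂(gammaMeasure a 1)) +
         (∫⁻ x, ENNReal.ofReal (Real.exp (-1 * l * (x-a))) ∂(gammaMeasure a 1))) := by
        rw [lintegral_const_mul _ (by fun_prop), lintegral_add_left (by fun_prop)]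
    _ ≤ ENNReal.ofReal ((Nat.factorial (2*m):ℝ) * a^m) *
        (ENNReal.ofReal (Real.exp 2) + ENNReal.ofReal (Real.exp 2)) := by
        gcongr
        · rw [hl]
          have h := lintegral_exp_shift (e := 1) ha (Or.inl rfl)
          simpa using h
        · rw [hl]
          have h := lintegral_exp_shift (e := -1) ha (Or.inr rfl)
          simpa using h
    _ = ENNReal.ofReal ((Nat.factorial (2*m):ℝ) * a^m * (2 * Real.exp 2)) := by
        rw [← ENNReal.ofReal_add (Real.exp_pos _).le (Real.exp_pos _).le,
          ← ENNReal.ofReal_mul (by positivity)]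
        ring_nf
lemma sum2_pow {p q : ℝ} (hp : 0 ≤ p) (hq : 0 ≤ q) (k : ℕ) :
    (p + q)^k ≤ 2^k * (p^k + q^k) := by
  have h : p + q ≤ 2 * max p q := by
    rcases le_total p q with h|h
    · rw [max_eq_right h]; linarith
    · rw [max_eq_left h]; linarith
  calc (p+q)^k ≤ (2 * max p q)^k := pow_le_pow_left₀ (by positivity) h k
    _ = 2^k * (max p q)^k := mul_pow 2 _ k
    _ ≤ 2^k * (p^k + q^k) := by
        have : (max p q)^k ≤ p^k + q^k := by
          rcases le_total p q with h|h
          · rw [max_eq_right h]; nlinarith [pow_nonneg hp k]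
          · rw [max_eq_left h]; nlinarith [pow_nonneg hq k]
        nlinarith [pow_nonneg (show (0:ℝ) ≤ 2 by norm_num) k]

lemma abs_log_sub_log_le {x a : ℝ} (hx : 0 < x) (ha : 0 < a) :
    |Real.log x - Real.log a| ≤ |x - a|/a + |x - a|/x := by
  rcases le_total a x with h|h
  · rw [abs_of_nonneg (by linarith [Real.log_le_log ha h] :
      (0:ℝ) ≤ Real.log x - Real.log a), abs_of_nonneg (by linarith : (0:ℝ) ≤ x - a)]
    have h1 : Real.log x - Real.log a = Real.log (x/a) := (Real.log_div hx.ne' ha.ne').symm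
    have h2 : Real.log (x/a) ≤ x/a - 1 := Real.log_le_sub_one_of_pos (div_pos hx ha)
    have h3 : x/a - 1 = (x-a)/a := by field_simp
    have h4 : 0 ≤ (x-a)/x := div_nonneg (by linarith) hx.le
    linarith
  · rw [abs_sub_comm, abs_of_nonneg (by linarith [Real.log_le_log hx h] :
      (0:ℝ) ≤ Real.log a - Real.log x), abs_sub_comm x a, abs_of_nonneg (by linarith : (0:ℝ) ≤ a - x)]
    have h1 : Real.log a - Real.log x = Real.log (a/x) := (Real.log_div ha.ne' hx.ne').symm
    have h2 : Real.log (a/x) ≤ a/x - 1 := Real.log_le_sub_one_of_pos (div_pos ha hx)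
    have h3 : a/x - 1 = (a-x)/x := by field_simp
    have h4 : 0 ≤ (a-x)/a := div_nonneg (by linarith) ha.le
    linarith

lemma gamma_ae_pos {a : ℝ} (ha : 1 < a) : ∀ᵐ x ∂(gammaMeasure a 1), 0 < x := by
  rw [ae_iff]
  have hset : {x : ℝ | ¬ 0 < x} = Set.Iic 0 := by ext x; simp
  rw [hset, gammaMeasure, withDensity_apply _ measurableSet_Iic]
  have hz : ∀ x ∈ Set.Iic 0, gammaPDF a 1 x = (0 : ℝ≥0∞) := by
    intro x hx
    rcases lt_or_eq_of_le (Set.mem_Iic.mp hx) with hlt | heq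
    · exact gammaPDF_of_neg hlt
    · subst heq
      rw [gammaPDF_of_nonneg le_rfl,
        Real.zero_rpow (by linarith : (0:ℝ) < a - 1).ne']
      simp
  rw [setLIntegral_congr_fun measurableSet_Iic (show Set.EqOn (gammaPDF a 1) (fun _ => 0) (Set.Iic 0) from hz)]
  simp
lemma myCS {μ : Measure ℝ} {F G : ℝ → ℝ≥0∞} (hF : AEMeasurable F μ) (hG : AEMeasurable G μ) :
    ∫⁻ x, F x * G x ∂μ ≤
      (∫⁻ x, (F x) ^ (2:ℝ) ∂μ) ^ ((1:ℝ)/2) * (∫⁻ x, (G x) ^ (2:ℝ) ∂μ) ^ ((1:ℝ)/2) :=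
  ENNReal.lintegral_mul_le_Lp_mul_Lq μ ⟨by norm_num, by norm_num, by norm_num⟩ hF hG

lemma Gamma_ratio_le {a : ℝ} {j : ℕ} (hj : 0 < j) (h : (2*j:ℝ) ≤ a) :
    Real.Gamma (a - j) / Real.Gamma a ≤ (2/a)^j := by
  have hj1 : (1:ℝ) ≤ j := by exact_mod_cast hj
  have ha0 : (0:ℝ) < a := by linarith
  have haj : (0:ℝ) < a - j := by linarith
  have hcast : (a - j) + (j:ℕ) = a := by push_cast; ring
  have hprod := Gamma_prod (a - j) haj j
  rw [hcast] at hprod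
  set P : ℝ := ∏ i ∈ Finset.range j, (a - j + i) with hP
  have hPge : (a/2)^j ≤ P := by
    rw [hP, show (a/2)^j = ∏ _i ∈ Finset.range j, (a/2) by
      rw [Finset.prod_const, Finset.card_range]]
    apply Finset.prod_le_prod (fun i _ => by positivity)
    intro i hi
    have : (0:ℝ) ≤ i := Nat.cast_nonneg i
    linarith
  have hPpos : 0 < P := lt_of_lt_of_le (by positivity) hPge
  have hgpos : 0 < Real.Gamma (a - j) := Real.Gamma_pos_of_pos haj
  have hgapos : 0 < Real.Gamma a := Real.Gamma_pos_of_pos ha0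
  have key : Real.Gamma (a - j) / Real.Gamma a = P⁻¹ := by
    rw [hprod]; field_simp
  rw [key, show (2/a) = (a/2)⁻¹ by field_simp, inv_pow]
  exact inv_anti₀ (by positivity) hPge

lemma sqrt_pow_eq {a : ℝ} (ha : 0 ≤ a) (k : ℕ) : Real.sqrt (a^k) = (Real.sqrt a)^k := by
  rw [show a^k = ((Real.sqrt a)^k)^2 by
      rw [← pow_mul, show k*2 = 2*k by ring, pow_mul, Real.sq_sqrt ha],
    Real.sqrt_sq (pow_nonneg (Real.sqrt_nonneg a) k)]

lemma quarter_rpow (n : ℕ) (k : ℕ) :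
    ((Real.sqrt (Real.sqrt n))^k)⁻¹ = (n:ℝ) ^ (-(k:ℝ)/4) := by
  have hnn : (0:ℝ) ≤ n := Nat.cast_nonneg n
  have h1 : Real.sqrt (Real.sqrt n) = (n:ℝ) ^ ((1:ℝ)/4) := by
    rw [Real.sqrt_eq_rpow, Real.sqrt_eq_rpow, ← Real.rpow_mul hnn]
    norm_num
  rw [h1, ← Real.rpow_natCast ((n:ℝ) ^ ((1:ℝ)/4)) k, ← Real.rpow_mul hnn,
    ← Real.rpow_neg hnn]
  congr 1
  ring
set_option maxHeartbeats 2000000 in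
lemma large_case (k : ℕ) (hk : 1 ≤ k) (n : ℕ) (hn : 1 ≤ n)
    (hbig : (4*k : ℝ) ≤ Real.sqrt n) :
    ∫⁻ x, ENNReal.ofReal (|(-Real.log x + (1/2) * Real.log n)| ^ k)
        ∂(gammaMeasure (Real.sqrt n + 1/2) 1)
      ≤ ENNReal.ofReal ((4:ℝ)^k *
          (Real.sqrt ((Nat.factorial (2*k) : ℝ) * (2 * Real.exp 2)) * (1 + 2^k) + 1)
          * ((n:ℝ) ^ (-(k:ℝ)/4))) := by
  set s : ℝ := Real.sqrt n with hs
  set a : ℝ := s + 1/2 with hadef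
  have hk1 : (1:ℝ) ≤ k := by exact_mod_cast hk
  have hs1 : (1:ℝ) ≤ s := by
    rw [hs, show (1:ℝ) = Real.sqrt 1 by simp]
    exact Real.sqrt_le_sqrt (by exact_mod_cast hn)
  have hs0 : (0:ℝ) < s := by linarith
  have ha0 : (0:ℝ) < a := by rw [hadef]; linarith
  have ha1 : (1:ℝ) < a := by rw [hadef]; linarith
  have ha4 : (4:ℝ) ≤ a := by rw [hadef]; nlinarith
  have hsa0 : (0:ℝ) < Real.sqrt a := Real.sqrt_pos.mpr ha0
  have hss0 : (0:ℝ) < Real.sqrt s := Real.sqrt_pos.mpr hs0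
  set D : ℝ := Real.sqrt ((Nat.factorial (2*k) : ℝ) * (2 * Real.exp 2)) with hD
  have hD0 : 0 ≤ D := Real.sqrt_nonneg _
  set c : ℝ := (Real.sqrt s)⁻¹ with hc
  have hc0 : 0 < c := by positivity
  haveI : IsProbabilityMeasure (gammaMeasure a 1) := isProbabilityMeasure_gammaMeasure ha0 one_pos
  clear_value s a D c
  -- pointwise bound
  have hptwise : ∀ x : ℝ, 0 < x →
      |(-Real.log x + (1/2) * Real.log n)| ^ k ≤
        (4:ℝ)^k * ((|x - a|^k * (a^k)⁻¹) + (|x-a|^k * (x^k)⁻¹) + c^k) := by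
    intro x hx
    have hL : (1/2) * Real.log n = Real.log s := by
      rw [hs, Real.log_sqrt (Nat.cast_nonneg n)]; ring
    have habs : |(-Real.log x + (1/2) * Real.log n)| = |Real.log x - Real.log s| := by
      rw [hL, ← abs_neg]; congr 1; ring
    have h1 : |Real.log x - Real.log s|
        ≤ |Real.log x - Real.log a| + |Real.log a - Real.log s| := by
      have := abs_add_le (Real.log x - Real.log a) (Real.log a - Real.log s)
      simpa using this
    have h2 := abs_log_sub_log_le hx ha0
    have h3 := abs_log_sub_log_le ha0 hs0
    have has : a - s = 1/2 := by rw [hadef]; ring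
    have h4 : |Real.log a - Real.log s| ≤ c := by
      have hsrt : Real.sqrt s ≤ s := by
        have h1s : (1:ℝ) ≤ Real.sqrt s := by
          rw [show (1:ℝ) = Real.sqrt 1 by simp]; exact Real.sqrt_le_sqrt hs1
        nlinarith [Real.mul_self_sqrt hs0.le]
      have habs2 : |a - s| = 1/2 := by rw [has]; norm_num
      have hb1 : |a-s|/a ≤ |a-s|/s :=
        div_le_div_of_nonneg_left (abs_nonneg _) hs0 (by rw [hadef]; linarith)
      have hb2 : |a-s|/s + |a-s|/s = 1/s := by rw [habs2]; ring
      have hb3 : (1:ℝ)/s ≤ c := by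
        rw [hc, one_div]; exact inv_anti₀ hss0 hsrt
      linarith
    have hA0 : 0 ≤ |x-a|/a := by positivity
    have hB0 : 0 ≤ |x-a|/x := by positivity
    have hsum : |(-Real.log x + (1/2) * Real.log n)| ≤ |x-a|/a + |x-a|/x + c := by
      rw [habs]; linarith
    have hpow : |(-Real.log x + (1/2)*Real.log n)|^k ≤ (|x-a|/a + |x-a|/x + c)^k :=
      pow_le_pow_left₀ (abs_nonneg _) hsum k
    have h2k0 : (0:ℝ) ≤ 2^k := by positivity
    have hstep : (|x-a|/a + |x-a|/x + c)^k
        ≤ 4^k * ((|x-a|/a)^k + (|x-a|/x)^k + c^k) := by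
      have s1 := sum2_pow (by positivity : (0:ℝ) ≤ |x-a|/a + |x-a|/x) hc0.le k
      have s2 := sum2_pow hA0 hB0 k
      have h4k : (4:ℝ)^k = 2^k * 2^k := by rw [← mul_pow]; norm_num
      have h1le : (1:ℝ) ≤ 2^k := by
        have := pow_le_pow_left₀ (by norm_num : (0:ℝ) ≤ 1) (by norm_num : (1:ℝ) ≤ 2) k
        simpa using this
      have hc2 : c^k ≤ 2^k * c^k := le_mul_of_one_le_left (pow_nonneg hc0.le k) h1le
      have t1 : (2:ℝ)^k * (((|x-a|/a) + (|x-a|/x))^k + c^k)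
          ≤ 2^k * (2^k * ((|x-a|/a)^k + (|x-a|/x)^k) + 2^k * c^k) := by
        apply mul_le_mul_of_nonneg_left _ h2k0
        linarith
      have t2 : (2:ℝ)^k * (2^k * ((|x-a|/a)^k + (|x-a|/x)^k) + 2^k * c^k)
          = 4^k * ((|x-a|/a)^k + (|x-a|/x)^k + c^k) := by rw [h4k]; ring
      linarith
    have hdiv1 : (|x-a|/a)^k = |x-a|^k * (a^k)⁻¹ := by rw [div_pow, div_eq_mul_inv]
    have hdiv2 : (|x-a|/x)^k = |x-a|^k * (x^k)⁻¹ := by rw [div_pow, div_eq_mul_inv]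
    rw [hdiv1, hdiv2] at hstep
    linarith
  -- ENNReal functions
  set F : ℝ → ℝ≥0∞ := fun x => ENNReal.ofReal (|x - a|^k) with hF
  set G : ℝ → ℝ≥0∞ := fun x => ENNReal.ofReal ((x^k)⁻¹) with hG
  have hFm : Measurable F := ((measurable_id.sub_const a).abs.pow_const k).ennreal_ofReal
  have hGm : Measurable G := ((measurable_id.pow_const k).inv).ennreal_ofReal
  -- F squared
  have hF2eq : ∀ x : ℝ, F x ^ (2:ℝ) = ENNReal.ofReal ((x-a)^(2*k)) := by
    intro x
    rw [hF, ENNReal.ofReal_rpow_of_nonneg (by positivity) (by norm_num)]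
    congr 1
    rw [Real.rpow_two, ← pow_mul, mul_comm k 2, pow_abs,
      abs_of_nonneg (Even.pow_nonneg (even_two_mul k) _)]
  have hF2 : ∫⁻ x, F x ^ (2:ℝ) ∂(gammaMeasure a 1)
      ≤ ENNReal.ofReal ((Nat.factorial (2*k) : ℝ) * a^k * (2 * Real.exp 2)) := by
    simp_rw [hF2eq]
    exact lintegral_central_moment ha4 k
  have hQhalf : (ENNReal.ofReal ((Nat.factorial (2*k) : ℝ) * a^k * (2 * Real.exp 2))) ^ ((1:ℝ)/2)
      = ENNReal.ofReal (D * (Real.sqrt a)^k) := by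
    rw [ENNReal.ofReal_rpow_of_nonneg (by positivity) (by norm_num)]
    congr 1
    rw [show (Nat.factorial (2*k) : ℝ) * a^k * (2 * Real.exp 2)
        = ((Nat.factorial (2*k) : ℝ) * (2 * Real.exp 2)) * a^k by ring,
      ← Real.sqrt_eq_rpow, Real.sqrt_mul (by positivity), sqrt_pow_eq ha0.le, hD]
  have hFhalf : (∫⁻ x, F x ^ (2:ℝ) ∂(gammaMeasure a 1)) ^ ((1:ℝ)/2)
      ≤ ENNReal.ofReal (D * (Real.sqrt a)^k) := by
    rw [← hQhalf]
    exact ENNReal.rpow_le_rpow hF2 (by norm_num)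
  -- J = ∫ F
  have hJ : ∫⁻ x, F x ∂(gammaMeasure a 1) ≤ ENNReal.ofReal (D * (Real.sqrt a)^k) := by
    have hcs := myCS (μ := gammaMeasure a 1) hFm.aemeasurable
      (G := fun _ => (1:ℝ≥0∞)) aemeasurable_const
    simp only [mul_one, ENNReal.one_rpow, lintegral_one, measure_univ] at hcs
    exact hcs.trans hFhalf
  -- G squared integral
  have hcast2k : ((2*k : ℕ):ℝ) < a := by push_cast; linarith
  have hG2 : ∫⁻ x, G x ^ (2:ℝ) ∂(gammaMeasure a 1)
      = ENNReal.ofReal (Real.Gamma (a - (2*k:ℕ)) / Real.Gamma a) := by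
    rw [← lintegral_inv_pow_gamma ha0 (2*k) hcast2k]
    apply lintegral_congr_ae
    filter_upwards [gamma_ae_pos ha1] with x hx
    rw [hG, ENNReal.ofReal_rpow_of_nonneg (by positivity) (by norm_num)]
    congr 1
    rw [Real.rpow_two, inv_pow, ← pow_mul, mul_comm k 2]
  have hGhalf : (∫⁻ x, G x ^ (2:ℝ) ∂(gammaMeasure a 1)) ^ ((1:ℝ)/2)
      ≤ ENNReal.ofReal ((2/a)^k) := by
    rw [hG2]
    have hratio : Real.Gamma (a - (2*k:ℕ)) / Real.Gamma a ≤ (2/a)^(2*k) := by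
      apply Gamma_ratio_le (by positivity) _
      push_cast; linarith
    calc (ENNReal.ofReal (Real.Gamma (a - (2*k:ℕ)) / Real.Gamma a)) ^ ((1:ℝ)/2)
        ≤ (ENNReal.ofReal ((2/a)^(2*k))) ^ ((1:ℝ)/2) :=
          ENNReal.rpow_le_rpow (ENNReal.ofReal_le_ofReal hratio) (by norm_num)
      _ = ENNReal.ofReal ((2/a)^k) := by
          rw [ENNReal.ofReal_rpow_of_nonneg (by positivity) (by norm_num)]
          congr 1
          rw [← Real.sqrt_eq_rpow, mul_comm 2 k, pow_mul, Real.sqrt_sq (by positivity)]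
  -- FG
  have hFG : ∫⁻ x, F x * G x ∂(gammaMeasure a 1)
      ≤ ENNReal.ofReal (D * (Real.sqrt a)^k) * ENNReal.ofReal ((2/a)^k) := by
    calc ∫⁻ x, F x * G x ∂(gammaMeasure a 1)
        ≤ (∫⁻ x, F x ^ (2:ℝ) ∂(gammaMeasure a 1)) ^ ((1:ℝ)/2)
          * (∫⁻ x, G x ^ (2:ℝ) ∂(gammaMeasure a 1)) ^ ((1:ℝ)/2) :=
          myCS hFm.aemeasurable hGm.aemeasurable
      _ ≤ _ := mul_le_mul' hFhalf hGhalf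
  -- main chain
  calc ∫⁻ x, ENNReal.ofReal (|(-Real.log x + (1/2) * Real.log n)| ^ k) ∂(gammaMeasure a 1)
      ≤ ∫⁻ x, ENNReal.ofReal ((4:ℝ)^k) *
          (F x * ENNReal.ofReal ((a^k)⁻¹) + F x * G x + ENNReal.ofReal (c^k))
          ∂(gammaMeasure a 1) := by
        apply lintegral_mono_ae
        filter_upwards [gamma_ae_pos ha1] with x hx
        calc ENNReal.ofReal (|(-Real.log x + (1/2) * Real.log n)| ^ k)
            ≤ ENNReal.ofReal ((4:ℝ)^k * ((|x - a|^k * (a^k)⁻¹) + (|x-a|^k * (x^k)⁻¹) + c^k)) :=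
              ENNReal.ofReal_le_ofReal (hptwise x hx)
          _ = ENNReal.ofReal ((4:ℝ)^k) *
              (F x * ENNReal.ofReal ((a^k)⁻¹) + F x * G x + ENNReal.ofReal (c^k)) := by
              rw [ENNReal.ofReal_mul (by positivity),
                ENNReal.ofReal_add (by positivity) (by positivity),
                ENNReal.ofReal_add (by positivity) (by positivity), hF, hG,
                ENNReal.ofReal_mul (by positivity), ENNReal.ofReal_mul (by positivity)]
    _ = ENNReal.ofReal ((4:ℝ)^k) *
        ((∫⁻ x, F x ∂(gammaMeasure a 1)) * ENNReal.ofReal ((a^k)⁻¹)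
          + ∫⁻ x, F x * G x ∂(gammaMeasure a 1) + ENNReal.ofReal (c^k)) := by
        rw [lintegral_const_mul _ (by
          exact ((hFm.mul_const _).add ((hFm.mul hGm))).add measurable_const)]
        congr 1
        rw [lintegral_add_right _ measurable_const, lintegral_add_left (hFm.mul_const _),
          lintegral_mul_const _ hFm, lintegral_const, measure_univ, mul_one]
    _ ≤ ENNReal.ofReal ((4:ℝ)^k) *
        (ENNReal.ofReal (D * (Real.sqrt a)^k) * ENNReal.ofReal ((a^k)⁻¹)
          + ENNReal.ofReal (D * (Real.sqrt a)^k) * ENNReal.ofReal ((2/a)^k)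
          + ENNReal.ofReal (c^k)) := by
        gcongr
    _ = ENNReal.ofReal ((4:ℝ)^k * (D * (Real.sqrt a)^k * (a^k)⁻¹
          + D * (Real.sqrt a)^k * (2/a)^k + c^k)) := by
        rw [← ENNReal.ofReal_mul (by positivity), ← ENNReal.ofReal_mul (by positivity),
          ← ENNReal.ofReal_add (by positivity) (by positivity),
          ← ENNReal.ofReal_add (by positivity) (by positivity),
          ← ENNReal.ofReal_mul (by positivity)]
    _ ≤ ENNReal.ofReal ((4:ℝ)^k * (D * (1 + 2^k) + 1) * ((n:ℝ) ^ (-(k:ℝ)/4))) := by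
        apply ENNReal.ofReal_le_ofReal
        have haa : (Real.sqrt a)^k * (Real.sqrt a)^k = a^k := by
          rw [← mul_pow, Real.mul_self_sqrt ha0.le]
        have e1 : (Real.sqrt a)^k * (a^k)⁻¹ = ((Real.sqrt a)^k)⁻¹ := by
          rw [← haa, mul_inv, ← mul_assoc, mul_inv_cancel₀ (pow_ne_zero _ hsa0.ne'), one_mul]
        have e2 : (Real.sqrt a)^k * (2/a)^k = 2^k * ((Real.sqrt a)^k)⁻¹ := by
          rw [← mul_pow]
          have : Real.sqrt a * (2/a) = 2/Real.sqrt a := by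
            rw [eq_div_iff hsa0.ne']
            field_simp
            nlinarith [Real.mul_self_sqrt ha0.le]
          rw [this, div_pow, div_eq_mul_inv]
        have e3 : c^k = ((Real.sqrt s)^k)⁻¹ := by rw [hc, inv_pow]
        have e4 : ((Real.sqrt a)^k)⁻¹ ≤ ((Real.sqrt s)^k)⁻¹ := by
          apply inv_anti₀ (by positivity)
          exact pow_le_pow_left₀ hss0.le (Real.sqrt_le_sqrt (by rw [hadef]; linarith)) k
        have e5 : ((Real.sqrt s)^k)⁻¹ = (n:ℝ) ^ (-(k:ℝ)/4) := by
          rw [hs]; exact quarter_rpow n k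
        have hrpos : (0:ℝ) ≤ ((Real.sqrt s)^k)⁻¹ := by positivity
        have h4k0 : (0:ℝ) ≤ 4^k := by positivity
        have h2k0 : (0:ℝ) ≤ 2^k := by positivity
        rw [mul_assoc ((4:ℝ)^k), mul_assoc D, e1, mul_assoc D, e2, e3, ← e5]
        apply mul_le_mul_of_nonneg_left _ h4k0
        calc D * ((Real.sqrt a)^k)⁻¹ + D * (2^k * ((Real.sqrt a)^k)⁻¹) + ((Real.sqrt s)^k)⁻¹
            ≤ D * ((Real.sqrt s)^k)⁻¹ + D * (2^k * ((Real.sqrt s)^k)⁻¹)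
              + ((Real.sqrt s)^k)⁻¹ := by gcongr
          _ = (D * (1 + 2^k) + 1) * ((Real.sqrt s)^k)⁻¹ := by ring
set_option maxHeartbeats 2000000 in
lemma small_case (k : ℕ) (hk : 1 ≤ k) (n : ℕ) (hn : 1 ≤ n)
    (hsmall : Real.sqrt n < (4*k : ℝ)) :
    ∫⁻ x, ENNReal.ofReal (|(-Real.log x + (1/2) * Real.log n)| ^ k)
        ∂(gammaMeasure (Real.sqrt n + 1/2) 1)
      ≤ ENNReal.ofReal ((2^k * ((2*(k:ℝ))^k * ((6*(k:ℝ))^k + 3) + (4*(k:ℝ))^k)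
          * (16*(k:ℝ)^2)^k) * ((n:ℝ) ^ (-(k:ℝ)/4))) := by
  set s : ℝ := Real.sqrt n with hs
  set a : ℝ := s + 1/2 with hadef
  have hk1 : (1:ℝ) ≤ k := by exact_mod_cast hk
  have hs1 : (1:ℝ) ≤ s := by
    rw [hs, show (1:ℝ) = Real.sqrt 1 by simp]
    exact Real.sqrt_le_sqrt (by exact_mod_cast hn)
  have hs0 : (0:ℝ) < s := by linarith
  have ha0 : (0:ℝ) < a := by rw [hadef]; linarith
  have ha1 : (1:ℝ) < a := by rw [hadef]; linarith
  have ha32 : (3/2:ℝ) ≤ a := by rw [hadef]; linarith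
  have hak : a + k ≤ 6*(k:ℝ) := by rw [hadef]; nlinarith
  have hL : (1/2) * Real.log n = Real.log s := by
    rw [hs, Real.log_sqrt (Nat.cast_nonneg n)]; ring
  have hLnn : 0 ≤ Real.log s := Real.log_nonneg hs1
  have hLle : Real.log s ≤ 4*(k:ℝ) := by
    have := Real.log_le_sub_one_of_pos hs0
    linarith
  haveI : IsProbabilityMeasure (gammaMeasure a 1) := isProbabilityMeasure_gammaMeasure ha0 one_pos
  have hsrt : Real.sqrt s ≤ s := by
    have h1s : (1:ℝ) ≤ Real.sqrt s := by
      rw [show (1:ℝ) = Real.sqrt 1 by simp]; exact Real.sqrt_le_sqrt hs1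
    nlinarith [Real.mul_self_sqrt hs0.le]
  have hss0 : (0:ℝ) < Real.sqrt s := Real.sqrt_pos.mpr hs0
  clear_value s a
  -- pointwise log bound
  have hlogbd : ∀ x : ℝ, 0 < x →
      |Real.log x|^k ≤ (2*(k:ℝ))^k * (x^k + 1 + (x^1)⁻¹) := by
    intro x hx
    have h2k0 : (0:ℝ) < 2*(k:ℝ) := by linarith
    have h2k1 : (1:ℝ) ≤ (2*(k:ℝ))^k := by
      have := pow_le_pow_left₀ (by norm_num : (0:ℝ) ≤ 1) (by linarith : (1:ℝ) ≤ 2*(k:ℝ)) k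
      simpa using this
    rcases le_or_gt 1 x with hx1 | hx1
    · have hlx : |Real.log x| = Real.log x := abs_of_nonneg (Real.log_nonneg hx1)
      have hlog : Real.log x ≤ x := by
        have := Real.log_le_sub_one_of_pos hx; linarith
      have h1 : |Real.log x|^k ≤ x^k := by
        rw [hlx]; exact pow_le_pow_left₀ (Real.log_nonneg hx1) hlog k
      have hxk : (0:ℝ) ≤ x^k := by positivity
      have hxinv : (0:ℝ) ≤ (x^1)⁻¹ := by positivity
      nlinarith [pow_nonneg (abs_nonneg (Real.log x)) k]
    · have hlx : |Real.log x| = -Real.log x :=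
        abs_of_nonpos (Real.log_nonpos hx.le hx1.le)
      set t : ℝ := x ^ (-(1/(2*(k:ℝ)))) with ht
      have ht0 : 0 < t := Real.rpow_pos_of_pos hx _
      have hlogt : Real.log t = -(1/(2*(k:ℝ))) * Real.log x := Real.log_rpow hx _
      have hlt : Real.log t ≤ t := by
        have := Real.log_le_sub_one_of_pos ht0; linarith
      have hneg : -Real.log x ≤ 2*(k:ℝ) * t := by
        have : -Real.log x = 2*(k:ℝ) * Real.log t := by
          rw [hlogt]; field_simp
        rw [this]
        exact mul_le_mul_of_nonneg_left hlt h2k0.le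
      have hpow : |Real.log x|^k ≤ (2*(k:ℝ) * t)^k := by
        rw [hlx]
        exact pow_le_pow_left₀ (by rw [← hlx]; exact abs_nonneg _) hneg k
      have htk : t^k = x ^ ((-1:ℝ)/2) := by
        rw [ht, ← Real.rpow_natCast (x ^ (-(1/(2*(k:ℝ))))) k, ← Real.rpow_mul hx.le]
        congr 1
        field_simp
      have hxhalf : x ^ ((-1:ℝ)/2) ≤ (x^1)⁻¹ := by
        rw [show ((x:ℝ)^1)⁻¹ = x ^ (-1:ℝ) by rw [pow_one, ← Real.rpow_neg_one]]
        exact Real.rpow_le_rpow_of_exponent_ge hx hx1.le (by norm_num)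
      have hfinal : (2*(k:ℝ) * t)^k ≤ (2*(k:ℝ))^k * (x^1)⁻¹ := by
        rw [mul_pow]
        apply mul_le_mul_of_nonneg_left _ (by positivity)
        rw [htk] at *
        exact le_trans (le_of_eq rfl) (by rw [← htk]; rw [htk]; exact hxhalf)
      have hxk : (0:ℝ) ≤ x^k := by positivity
      nlinarith [pow_nonneg (abs_nonneg (Real.log x)) k]
  -- pointwise full bound
  have hptwise : ∀ x : ℝ, 0 < x →
      |(-Real.log x + (1/2) * Real.log n)| ^ k ≤
        2^k * ((2*(k:ℝ))^k * (x^k + 1 + (x^1)⁻¹) + (4*(k:ℝ))^k) := by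
    intro x hx
    have htri : |(-Real.log x + (1/2) * Real.log n)| ≤ |Real.log x| + Real.log s := by
      rw [hL]
      calc |(-Real.log x + Real.log s)| ≤ |(-Real.log x)| + |Real.log s| := abs_add_le _ _
        _ = |Real.log x| + Real.log s := by rw [abs_neg, abs_of_nonneg hLnn]
    have h1 : |(-Real.log x + (1/2) * Real.log n)|^k ≤ (|Real.log x| + Real.log s)^k :=
      pow_le_pow_left₀ (abs_nonneg _) htri k
    have h2 : (|Real.log x| + Real.log s)^k ≤ 2^k * (|Real.log x|^k + (Real.log s)^k) :=
      sum2_pow (abs_nonneg _) hLnn k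
    have h3 : (Real.log s)^k ≤ (4*(k:ℝ))^k := pow_le_pow_left₀ hLnn hLle k
    have h4 := hlogbd x hx
    have h2k0 : (0:ℝ) ≤ 2^k := by positivity
    nlinarith [h2k0]
  -- integral computation
  have hprob : ∫⁻ _x, (1:ℝ≥0∞) ∂(gammaMeasure a 1) = 1 := by
    rw [lintegral_one, measure_univ]
  have hMk : ∫⁻ x, ENNReal.ofReal (x^k) ∂(gammaMeasure a 1)
      ≤ ENNReal.ofReal ((6*(k:ℝ))^k) := by
    rw [lintegral_pow_gamma ha0 k]
    apply ENNReal.ofReal_le_ofReal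
    have hga : 0 < Real.Gamma a := Real.Gamma_pos_of_pos ha0
    have hprod := Gamma_prod a ha0 k
    have hratio : Real.Gamma (a + k) / Real.Gamma a = ∏ i ∈ Finset.range k, (a + i) := by
      rw [hprod]; field_simp
    rw [hratio, show (6*(k:ℝ))^k = ∏ _i ∈ Finset.range k, (6*(k:ℝ)) by
      rw [Finset.prod_const, Finset.card_range]]
    apply Finset.prod_le_prod (fun i _ => by positivity)
    intro i hi
    have hik : (i:ℝ) ≤ k := by
      have := Finset.mem_range.mp hi
      exact_mod_cast this.le
    linarith
  have hMinv : ∫⁻ x, ENNReal.ofReal ((x^1)⁻¹) ∂(gammaMeasure a 1)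
      ≤ ENNReal.ofReal 2 := by
    rw [lintegral_inv_pow_gamma ha0 1 (by push_cast; linarith)]
    apply ENNReal.ofReal_le_ofReal
    have hga1 : 0 < Real.Gamma (a - 1) := Real.Gamma_pos_of_pos (by push_cast; linarith)
    have hrec : Real.Gamma a = (a-1) * Real.Gamma (a-1) := by
      rw [show a = (a - 1) + 1 by ring, Real.Gamma_add_one (by norm_num; linarith)]
      ring_nf
    have : Real.Gamma (a - (1:ℕ)) / Real.Gamma a = (a-1)⁻¹ := by
      push_cast
      rw [hrec, mul_comm, ← div_div, div_self hga1.ne', one_div]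
    rw [this]
    rw [show (2:ℝ) = (2⁻¹:ℝ)⁻¹ by norm_num]
    apply inv_anti₀ (by norm_num)
    linarith
  calc ∫⁻ x, ENNReal.ofReal (|(-Real.log x + (1/2) * Real.log n)| ^ k) ∂(gammaMeasure a 1)
      ≤ ∫⁻ x, ENNReal.ofReal ((2:ℝ)^k) * (ENNReal.ofReal ((2*(k:ℝ))^k) *
          (ENNReal.ofReal (x^k) + ENNReal.ofReal 1 + ENNReal.ofReal ((x^1)⁻¹))
          + ENNReal.ofReal ((4*(k:ℝ))^k)) ∂(gammaMeasure a 1) := by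
        apply lintegral_mono_ae
        filter_upwards [gamma_ae_pos ha1] with x hx
        calc ENNReal.ofReal (|(-Real.log x + (1/2) * Real.log n)| ^ k)
            ≤ ENNReal.ofReal (2^k * ((2*(k:ℝ))^k * (x^k + 1 + (x^1)⁻¹) + (4*(k:ℝ))^k)) :=
              ENNReal.ofReal_le_ofReal (hptwise x hx)
          _ = ENNReal.ofReal ((2:ℝ)^k) * (ENNReal.ofReal ((2*(k:ℝ))^k) *
              (ENNReal.ofReal (x^k) + ENNReal.ofReal 1 + ENNReal.ofReal ((x^1)⁻¹))
              + ENNReal.ofReal ((4*(k:ℝ))^k)) := by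
              rw [ENNReal.ofReal_mul (by positivity),
                ENNReal.ofReal_add (by positivity) (by positivity),
                ENNReal.ofReal_mul (by positivity),
                ENNReal.ofReal_add (by positivity) (by positivity),
                ENNReal.ofReal_add (by positivity) (by positivity)]
    _ = ENNReal.ofReal ((2:ℝ)^k) * (ENNReal.ofReal ((2*(k:ℝ))^k) *
          ((∫⁻ x, ENNReal.ofReal (x^k) ∂(gammaMeasure a 1)) + 1
            + ∫⁻ x, ENNReal.ofReal ((x^1)⁻¹) ∂(gammaMeasure a 1))
          + ENNReal.ofReal ((4*(k:ℝ))^k)) := by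
        have m1 : Measurable fun x : ℝ => ENNReal.ofReal (x^k) :=
          (measurable_id.pow_const k).ennreal_ofReal
        have m2 : Measurable fun x : ℝ => ENNReal.ofReal ((x^1)⁻¹) :=
          ((measurable_id.pow_const 1).inv).ennreal_ofReal
        rw [lintegral_const_mul _ (by fun_prop),
          lintegral_add_right _ measurable_const,
          lintegral_const_mul _ (by fun_prop),
          lintegral_add_right _ m2, lintegral_add_right _ measurable_const,
          lintegral_const, measure_univ, mul_one, ENNReal.ofReal_one]
        rw [lintegral_const, measure_univ, mul_one]
    _ ≤ ENNReal.ofReal ((2:ℝ)^k) * (ENNReal.ofReal ((2*(k:ℝ))^k) *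
          (ENNReal.ofReal ((6*(k:ℝ))^k) + 1 + ENNReal.ofReal 2)
          + ENNReal.ofReal ((4*(k:ℝ))^k)) := by gcongr
    _ = ENNReal.ofReal ((2:ℝ)^k * ((2*(k:ℝ))^k * ((6*(k:ℝ))^k + 3) + (4*(k:ℝ))^k)) := by
        rw [show (1:ℝ≥0∞) = ENNReal.ofReal 1 by simp,
          ← ENNReal.ofReal_add (by positivity) (by norm_num),
          ← ENNReal.ofReal_add (by positivity) (by norm_num),
          ← ENNReal.ofReal_mul (by positivity),
          ← ENNReal.ofReal_add (by positivity) (by positivity),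
          ← ENNReal.ofReal_mul (by positivity)]
        congr 1
        ring_nf
    _ ≤ ENNReal.ofReal ((2^k * ((2*(k:ℝ))^k * ((6*(k:ℝ))^k + 3) + (4*(k:ℝ))^k)
          * (16*(k:ℝ)^2)^k) * ((n:ℝ) ^ (-(k:ℝ)/4))) := by
        apply ENNReal.ofReal_le_ofReal
        set B : ℝ := 2^k * ((2*(k:ℝ))^k * ((6*(k:ℝ))^k + 3) + (4*(k:ℝ))^k) with hB
        have hB0 : (0:ℝ) ≤ B := by positivity
        have hq : ((Real.sqrt (Real.sqrt n))^k)⁻¹ = (n:ℝ) ^ (-(k:ℝ)/4) := quarter_rpow n k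
        rw [← hq]
        set r : ℝ := (Real.sqrt (Real.sqrt n))^k with hr
        have hr0 : 0 < r := by
          rw [hr]; rw [hs] at hss0; positivity
        have hrM : r ≤ (16*(k:ℝ)^2)^k := by
          rw [hr]
          apply pow_le_pow_left₀ (Real.sqrt_nonneg _)
          rw [hs] at hsrt hsmall
          calc Real.sqrt (Real.sqrt n) ≤ Real.sqrt n := hsrt
            _ ≤ 16*(k:ℝ)^2 := by nlinarith
        set M : ℝ := (16*(k:ℝ)^2)^k with hM
        have hM0 : (0:ℝ) < M := by rw [hM]; positivity
        calc B = B * M * M⁻¹ := by field_simp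
          _ ≤ B * M * r⁻¹ := by
              apply mul_le_mul_of_nonneg_left (inv_anti₀ hr0 hrM) (by positivity)

/-- For each integer `k ≥ 1` there is `C_k > 0` with
`E[|u_n|^k] ≤ C_k n^{-k/4}` for all `n ≥ 1`, where `u_n = -log X_n + (1/2) log n`
and `X_n ~ Gamma(√n + 1/2, 1)`. -/
theorem stmt_1 (k : ℕ) (hk : 1 ≤ k) :
    ∃ C : ℝ, 0 < C ∧ ∀ n : ℕ, 1 ≤ n →
      ∫ x, |(-Real.log x + (1 / 2) * Real.log n)| ^ k
          ∂(gammaMeasure (Real.sqrt n + 1 / 2) 1)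
        ≤ C * (n : ℝ) ^ (-(k : ℝ) / 4) := by
  set C1 : ℝ := (4:ℝ)^k *
    (Real.sqrt ((Nat.factorial (2*k) : ℝ) * (2 * Real.exp 2)) * (1 + 2^k) + 1) with hC1
  set C2 : ℝ := 2^k * ((2*(k:ℝ))^k * ((6*(k:ℝ))^k + 3) + (4*(k:ℝ))^k)
    * (16*(k:ℝ)^2)^k with hC2
  have hk1 : (1:ℝ) ≤ k := by exact_mod_cast hk
  have hC10 : 0 < C1 := by
    rw [hC1]
    have : (0:ℝ) ≤ Real.sqrt ((Nat.factorial (2*k) : ℝ) * (2 * Real.exp 2)) :=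
      Real.sqrt_nonneg _
    positivity
  have hC20 : 0 < C2 := by rw [hC2]; positivity
  refine ⟨C1 + C2, by linarith, ?_⟩
  intro n hn
  have hr0 : (0:ℝ) ≤ (n:ℝ) ^ (-(k:ℝ)/4) := Real.rpow_nonneg (Nat.cast_nonneg n) _
  have key : ∫⁻ x, ENNReal.ofReal (|(-Real.log x + (1/2) * Real.log n)| ^ k)
      ∂(gammaMeasure (Real.sqrt n + 1/2) 1)
      ≤ ENNReal.ofReal ((C1 + C2) * (n:ℝ) ^ (-(k:ℝ)/4)) := by
    rcases le_or_gt (4*(k:ℝ)) (Real.sqrt n) with hbig | hsmall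
    · refine (large_case k hk n hn hbig).trans (ENNReal.ofReal_le_ofReal ?_)
      rw [← hC1]
      exact mul_le_mul_of_nonneg_right (by linarith) hr0
    · refine (small_case k hk n hn hsmall).trans (ENNReal.ofReal_le_ofReal ?_)
      rw [← hC2]
      exact mul_le_mul_of_nonneg_right (by linarith) hr0
  have hmeas : Measurable fun x : ℝ => |(-Real.log x + (1/2) * Real.log n)| ^ k :=
    ((Real.measurable_log.neg.add_const _).abs.pow_const k)
  rw [integral_eq_lintegral_of_nonneg_ae (ae_of_all _ fun x => by positivity)
    hmeas.aestronglyMeasurable]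
  exact ENNReal.toReal_le_of_le_ofReal (mul_nonneg (by linarith) hr0) key
end

section
/- For each integer k ≥ 1 there exists a constant C_k > 0 such that for every integer n ≥ 1, E[|W_n|^k] ≤ C_k n^{−k/4}, where W_n = 1 − e^{−u_n} = 1 − n^{−1/2} X_n, u_n = −log X_n + (1/2) log n, and X_n has the Gamma distribution of shape √n + 1/2 and rate 1. -/
open MeasureTheory ProbabilityTheory Real

lemma aux_logA {t : ℝ} (ht0 : 0 < t) (ht2 : t ≤ 1/2) :
    -(t + 2*t^2) ≤ Real.log (1 - t) := by
  have h1t : (0:ℝ) < 1 - t := by linarith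
  have h2 : 1 ≤ (1 - t) * Real.exp (t + 2*t^2) := by
    nlinarith [Real.add_one_le_exp (t + 2*t^2)]
  have hexp : Real.exp (-(t + 2*t^2)) ≤ 1 - t := by
    calc Real.exp (-(t + 2*t^2)) = 1 * Real.exp (-(t + 2*t^2)) := (one_mul _).symm
      _ ≤ ((1 - t) * Real.exp (t + 2*t^2)) * Real.exp (-(t + 2*t^2)) :=
          mul_le_mul_of_nonneg_right h2 (Real.exp_pos _).le
      _ = (1 - t) * (Real.exp (t + 2*t^2) * Real.exp (-(t + 2*t^2))) := by ring
      _ = 1 - t := by rw [← Real.exp_add, add_neg_cancel, Real.exp_zero, mul_one]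
  calc -(t + 2*t^2) = Real.log (Real.exp (-(t + 2*t^2))) := (Real.log_exp _).symm
    _ ≤ Real.log (1 - t) := Real.log_le_log (Real.exp_pos _) hexp

lemma aux_logB {t : ℝ} (ht0 : 0 < t) (ht2 : t ≤ 1/2) :
    t - t^2 ≤ Real.log (1 + t) := by
  have h2 : 1 - (t - t^2) ≤ Real.exp (-(t - t^2)) := by
    have := Real.add_one_le_exp (-(t - t^2)); linarith
  have hpos : (0:ℝ) < 1 - (t - t^2) := by nlinarith
  have h3 : Real.exp (t - t^2) * (1 - (t - t^2)) ≤ 1 := by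
    calc Real.exp (t - t^2) * (1 - (t - t^2))
        ≤ Real.exp (t - t^2) * Real.exp (-(t - t^2)) :=
          mul_le_mul_of_nonneg_left h2 (Real.exp_pos _).le
      _ = 1 := by rw [← Real.exp_add, add_neg_cancel, Real.exp_zero]
  have hexp : Real.exp (t - t^2) ≤ 1 + t := by
    nlinarith [Real.exp_pos (t - t^2), mul_pos (Real.exp_pos (t - t^2)) hpos]
  calc t - t^2 = Real.log (Real.exp (t - t^2)) := (Real.log_exp _).symm
    _ ≤ Real.log (1 + t) := Real.log_le_log (Real.exp_pos _) hexp

lemma aux_exp {s t : ℝ} (hst2 : s * t^2 = 1/4) (ht0 : 0 < t) (ht2 : t ≤ 1/2) :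
    (s + 1/2) * (t + 2*t^2) - t*s ≤ 1 ∧ t*s - (s + 1/2) * (t - t^2) ≤ 1 := by
  constructor <;> nlinarith [sq_nonneg t]

lemma aux_step1 {q : ℝ} (hq0 : 0 < q) (k : ℕ) (w : ℝ) :
    |w|^k ≤ q⁻¹^k + q^k * w^(2*k) := by
  have hw2 : w^(2*k) = |w|^k * |w|^k := by
    rw [← pow_add, ← two_mul, pow_mul, pow_mul, sq_abs]
  have hw0 : (0:ℝ) ≤ w^(2*k) := by rw [hw2]; positivity
  rcases le_or_gt |w| q⁻¹ with h | h
  · have h1 : |w|^k ≤ q⁻¹^k := pow_le_pow_left₀ (abs_nonneg w) h k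
    have : (0:ℝ) ≤ q^k * w^(2*k) := mul_nonneg (pow_pos hq0 k).le hw0
    linarith
  · have h1 : q⁻¹ ^ k ≤ |w|^k := pow_le_pow_left₀ (by positivity) h.le k
    have hab : 1 ≤ q^k * |w|^k := by
      have := mul_le_mul_of_nonneg_left h1 (pow_pos hq0 k).le
      rwa [← mul_pow, mul_inv_cancel₀ hq0.ne', one_pow] at this
    have h4 : |w|^k * 1 ≤ |w|^k * (q^k * |w|^k) :=
      mul_le_mul_of_nonneg_left hab (pow_nonneg (abs_nonneg w) k)
    calc |w|^k = |w|^k * 1 := (mul_one _).symm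
      _ ≤ |w|^k * (q^k * |w|^k) := h4
      _ = q^k * w^(2*k) := by rw [hw2]; ring
      _ ≤ q⁻¹^k + q^k * w^(2*k) := le_add_of_nonneg_left (by positivity)

lemma aux_step3 {t c : ℝ} (ht0 : 0 < t) (htc : c * t = 1) (k : ℕ) (y : ℝ) :
    y^(2*k) ≤ ((2*k).factorial : ℝ) * c^(2*k) * (Real.exp (t*y) + Real.exp (-(t*y))) := by
  have key : (t*|y|)^(2*k) / ((2*k).factorial : ℝ) ≤ Real.exp (t*|y|) := by
    refine le_trans ?_ (Real.sum_le_exp_of_nonneg (by positivity) (2*k+1))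
    exact Finset.single_le_sum (f := fun i => (t*|y|)^i / (i.factorial : ℝ))
      (fun i _ => by positivity) (Finset.self_mem_range_succ (2*k))
  have habs : Real.exp (t*|y|) ≤ Real.exp (t*y) + Real.exp (-(t*y)) := by
    rcases abs_cases y with ⟨h1, h2⟩ | ⟨h1, h2⟩
    · rw [h1]; exact le_add_of_nonneg_right (Real.exp_pos _).le
    · rw [h1, show t * -y = -(t*y) by ring]
      exact le_add_of_nonneg_left (Real.exp_pos _).le
  have hkey : (t*|y|)^(2*k) ≤ ((2*k).factorial : ℝ) * Real.exp (t*|y|) := by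
    rw [div_le_iff₀ (by positivity)] at key; linarith [key]
  calc y^(2*k) = (c*t*|y|)^(2*k) := by
        rw [htc, one_mul, pow_mul, pow_mul, sq_abs]
    _ = c^(2*k) * (t*|y|)^(2*k) := by rw [mul_assoc, mul_pow]
    _ ≤ c^(2*k) * (((2*k).factorial : ℝ) * Real.exp (t*|y|)) := by
        apply mul_le_mul_of_nonneg_left hkey
        have : (0:ℝ) < c := by nlinarith
        positivity
    _ ≤ c^(2*k) * (((2*k).factorial : ℝ) * (Real.exp (t*y) + Real.exp (-(t*y)))) := by
        have hc : (0:ℝ) < c := by nlinarith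
        have : (0:ℝ) ≤ c^(2*k) * ((2*k).factorial : ℝ) := by positivity
        nlinarith [mul_le_mul_of_nonneg_left habs this]
    _ = ((2*k).factorial : ℝ) * c^(2*k) * (Real.exp (t*y) + Real.exp (-(t*y))) := by ring

lemma gamma_exp_lintegral {ν s : ℝ} (hν : 0 < ν) (hs : s < 1) :
    ∫⁻ x, ENNReal.ofReal (Real.exp (s * x)) ∂(gammaMeasure ν 1) =
      ENNReal.ofReal ((1 - s) ^ (-ν)) := by
  have h1s : 0 < 1 - s := by linarith
  rw [gammaMeasure, lintegral_withDensity_eq_lintegral_mul _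
    (show Measurable (gammaPDF ν 1) from (measurable_gammaPDFReal ν 1).ennreal_ofReal)
    ((measurable_const_mul s).exp.ennreal_ofReal)]
  have hpt : ∀ x : ℝ, (gammaPDF ν 1 * fun x => ENNReal.ofReal (Real.exp (s * x))) x
      = ENNReal.ofReal ((1 - s) ^ (-ν)) * gammaPDF ν (1 - s) x := by
    intro x
    simp only [Pi.mul_apply, gammaPDF_eq]
    split_ifs with hx
    · rw [← ENNReal.ofReal_mul (by positivity), ← ENNReal.ofReal_mul (by positivity)]
      congr 1
      have hG : Real.Gamma ν ≠ 0 := (Real.Gamma_pos_of_pos hν).ne'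
      have hpow : (1 - s) ^ (-ν) * (1 - s) ^ ν = 1 := by
        rw [← Real.rpow_add h1s]; simp
      have he : Real.exp (-(1 * x)) * Real.exp (s * x) = Real.exp (-((1 - s) * x)) := by
        rw [← Real.exp_add]; ring_nf
      calc (1:ℝ) ^ ν / Real.Gamma ν * x ^ (ν - 1) * Real.exp (-(1 * x)) * Real.exp (s * x)
          = (Real.exp (-(1*x)) * Real.exp (s*x)) * (1 / Real.Gamma ν * x ^ (ν-1)) := by
            rw [Real.one_rpow]; ring
        _ = Real.exp (-((1-s)*x)) * (1 / Real.Gamma ν * x ^ (ν-1)) := by rw [he]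
        _ = ((1-s)^(-ν) * (1-s)^ν) * (Real.exp (-((1-s)*x)) * (1 / Real.Gamma ν * x ^ (ν-1))) := by
            rw [hpow, one_mul]
        _ = (1-s)^(-ν) * ((1-s)^ν / Real.Gamma ν * x ^ (ν-1) * Real.exp (-((1-s)*x))) := by ring
    · simp
  rw [lintegral_congr hpt,
    lintegral_const_mul _ (show Measurable (gammaPDF ν (1-s)) from
      (measurable_gammaPDFReal ν (1 - s)).ennreal_ofReal)]
  rw [show (fun x => gammaPDF ν (1-s) x) = gammaPDF ν (1-s) from rfl,
    lintegral_gammaPDF_eq_one hν h1s, mul_one]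

lemma gamma_exp_integrable {ν s : ℝ} (hν : 0 < ν) (hs : s < 1) :
    Integrable (fun x => Real.exp (s * x)) (gammaMeasure ν 1) := by
  constructor
  · exact (measurable_const_mul s).exp.aestronglyMeasurable
  · rw [hasFiniteIntegral_iff_ofReal (ae_of_all _ fun x => (Real.exp_pos _).le),
      gamma_exp_lintegral hν hs]
    exact ENNReal.ofReal_lt_top

lemma gamma_exp_integral {ν s : ℝ} (hν : 0 < ν) (hs : s < 1) :
    ∫ x, Real.exp (s * x) ∂(gammaMeasure ν 1) = (1 - s) ^ (-ν) := by
  rw [integral_eq_lintegral_of_nonneg_ae (ae_of_all _ fun x => (Real.exp_pos _).le)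
      ((measurable_const_mul s).exp.aestronglyMeasurable),
    gamma_exp_lintegral hν hs,
    ENNReal.toReal_ofReal (Real.rpow_nonneg (by linarith) _)]

/-- For each integer `k ≥ 1` there is `C_k > 0` with
`E[|W_n|^k] ≤ C_k n^{-k/4}` for all `n ≥ 1`, where `W_n = 1 - n^{-1/2} X_n`
and `X_n ~ Gamma(√n + 1/2, 1)`. -/
theorem stmt_2 (k : ℕ) (hk : 1 ≤ k) :
    ∃ C : ℝ, 0 < C ∧ ∀ n : ℕ, 1 ≤ n →
      ∫ x, |1 - x / Real.sqrt n| ^ k ∂(gammaMeasure (Real.sqrt n + 1 / 2) 1)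
        ≤ C * (n : ℝ) ^ (-(k : ℝ) / 4) := by
  refine ⟨1 + 2 * Real.exp 1 * ((2*k).factorial : ℝ) * 4^k, by positivity, fun n hn => ?_⟩
  have hN1 : (1:ℝ) ≤ (n:ℝ) := by exact_mod_cast hn
  set N : ℝ := (n : ℝ) with hNdef
  have hN0 : (0:ℝ) < N := by linarith
  set s : ℝ := Real.sqrt N with hsdef
  have hs1 : (1:ℝ) ≤ s := by
    rw [hsdef, show (1:ℝ) = Real.sqrt 1 by simp]
    exact Real.sqrt_le_sqrt hN1
  set q : ℝ := Real.sqrt s with hqdef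
  have hq1 : (1:ℝ) ≤ q := by
    rw [hqdef, show (1:ℝ) = Real.sqrt 1 by simp]
    exact Real.sqrt_le_sqrt hs1
  have hq0 : (0:ℝ) < q := by linarith
  have hqs : q^2 = s := Real.sq_sqrt (by linarith)
  have hsN : s^2 = N := Real.sq_sqrt hN0.le
  have hN4 : N = q^4 := by rw [← hsN, ← hqs]; ring
  set ν : ℝ := s + 1/2 with hνdef
  have hν : 0 < ν := by rw [hνdef]; linarith
  set t : ℝ := (2*q)⁻¹ with htdef
  have ht0 : (0:ℝ) < t := by rw [htdef]; positivity
  have ht2 : t ≤ 1/2 := by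
    rw [htdef, inv_le_comm₀ (by positivity) (by norm_num)]
    linarith
  have ht1 : t < 1 := by linarith
  have ht1' : -t < 1 := by linarith
  have h1t : (0:ℝ) < 1 - t := by linarith
  have h1t' : (0:ℝ) < 1 + t := by linarith
  haveI : IsProbabilityMeasure (gammaMeasure ν 1) := isProbabilityMeasure_gammaMeasure hν one_pos
  have htc : (2*q) * t = 1 := by rw [htdef]; exact mul_inv_cancel₀ (by positivity)
  have hst2 : s * t^2 = 1/4 := by rw [htdef, ← hqs]; field_simp; ring
  have logA := aux_logA ht0 ht2
  have logB := aux_logB ht0 ht2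
  have boundA : Real.exp (-(t*s)) * (1 - t) ^ (-ν) ≤ Real.exp 1 := by
    rw [Real.rpow_def_of_pos h1t, ← Real.exp_add]
    apply Real.exp_le_exp.mpr
    have h2 : -Real.log (1 - t) ≤ t + 2*t^2 := by linarith
    have h3 := mul_le_mul_of_nonneg_right h2 hν.le
    have h4 : ν * (t + 2*t^2) - t*s ≤ 1 := by
      rw [hνdef]; exact (aux_exp hst2 ht0 ht2).1
    nlinarith [h3, h4]
  have boundB : Real.exp (t*s) * (1 + t) ^ (-ν) ≤ Real.exp 1 := by
    rw [Real.rpow_def_of_pos h1t', ← Real.exp_add]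
    apply Real.exp_le_exp.mpr
    have h2 : -(Real.log (1 + t)) ≤ -(t - t^2) := by linarith
    have h3 := mul_le_mul_of_nonneg_right h2 hν.le
    have h4 : t*s - ν * (t - t^2) ≤ 1 := by
      rw [hνdef]; exact (aux_exp hst2 ht0 ht2).2
    nlinarith [h3, h4]
  set D : ℝ := ((2*k).factorial : ℝ) * (2*q)^(2*k) * (q^k / N^k) with hDdef
  have hfg : ∀ x : ℝ, |1 - x / s|^k ≤ q⁻¹^k +
      D * (Real.exp (-(t*s)) * Real.exp (t*x) + Real.exp (t*s) * Real.exp (-t*x)) := by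
    intro x
    have h1 := aux_step1 hq0 k (1 - x / s)
    have hs0 : s ≠ 0 := by linarith
    have hw : (1 - x/s)^(2*k) = (x - s)^(2*k) / N^k := by
      have hsq : (1 - x/s)^2 = (x - s)^2 / N := by
        rw [← hsN]; field_simp; ring
      rw [pow_mul, hsq, div_pow, ← pow_mul]
    have h3 := aux_step3 ht0 htc k (x - s)
    have hDnn : (0:ℝ) ≤ q^k / N^k := by positivity
    have h4 : q^k * (1 - x/s)^(2*k) ≤
        D * (Real.exp (t*(x-s)) + Real.exp (-(t*(x-s)))) := by
      rw [hw, hDdef]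
      calc q^k * ((x-s)^(2*k) / N^k) = (q^k / N^k) * (x-s)^(2*k) := by ring
        _ ≤ (q^k / N^k) * (((2*k).factorial : ℝ) * (2*q)^(2*k) *
            (Real.exp (t*(x-s)) + Real.exp (-(t*(x-s))))) :=
          mul_le_mul_of_nonneg_left h3 hDnn
        _ = ((2*k).factorial : ℝ) * (2*q)^(2*k) * (q^k / N^k) *
            (Real.exp (t*(x-s)) + Real.exp (-(t*(x-s)))) := by ring
    have he1 : Real.exp (t*(x-s)) = Real.exp (-(t*s)) * Real.exp (t*x) := by
      rw [← Real.exp_add]; congr 1; ring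
    have he2 : Real.exp (-(t*(x-s))) = Real.exp (t*s) * Real.exp (-t*x) := by
      rw [← Real.exp_add]; congr 1; ring
    rw [he1, he2] at h4
    linarith [h1, h4]
  have hIt : Integrable (fun x => Real.exp (t*x)) (gammaMeasure ν 1) := gamma_exp_integrable hν ht1
  have hIt' : Integrable (fun x => Real.exp (-t*x)) (gammaMeasure ν 1) :=
    gamma_exp_integrable hν ht1'
  have hgInt : Integrable (fun x => q⁻¹^k +
      D * (Real.exp (-(t*s)) * Real.exp (t*x) + Real.exp (t*s) * Real.exp (-t*x)))
      (gammaMeasure ν 1) :=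
    (integrable_const _).add
      (((hIt.const_mul (Real.exp (-(t*s)))).add (hIt'.const_mul (Real.exp (t*s)))).const_mul D)
  have hfm : AEStronglyMeasurable (fun x : ℝ => |1 - x / s|^k) (gammaMeasure ν 1) := by
    apply Measurable.aestronglyMeasurable
    exact ((measurable_const.sub (measurable_id.div_const s)).abs.pow_const k)
  have hfInt : Integrable (fun x : ℝ => |1 - x / s|^k) (gammaMeasure ν 1) := by
    apply hgInt.mono' hfm
    refine ae_of_all _ fun x => ?_
    rw [Real.norm_eq_abs, abs_of_nonneg (by positivity)]
    exact hfg x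
  have hle : ∫ x, |1 - x / s|^k ∂(gammaMeasure ν 1) ≤
      ∫ x, (q⁻¹^k + D * (Real.exp (-(t*s)) * Real.exp (t*x) + Real.exp (t*s) * Real.exp (-t*x)))
        ∂(gammaMeasure ν 1) :=
    integral_mono hfInt hgInt (fun x => hfg x)
  have hMt : ∫ x, Real.exp (t*x) ∂(gammaMeasure ν 1) = (1-t)^(-ν) := gamma_exp_integral hν ht1
  have hMt' : ∫ x, Real.exp (-t*x) ∂(gammaMeasure ν 1) = (1+t)^(-ν) := by
    have h := gamma_exp_integral hν ht1'
    rwa [sub_neg_eq_add] at h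
  have hgval : ∫ x, (q⁻¹^k +
      D * (Real.exp (-(t*s)) * Real.exp (t*x) + Real.exp (t*s) * Real.exp (-t*x)))
        ∂(gammaMeasure ν 1)
      = q⁻¹^k + D * (Real.exp (-(t*s)) * (1-t)^(-ν) + Real.exp (t*s) * (1+t)^(-ν)) := by
    have hs1' : Integrable (fun x => Real.exp (-(t*s)) * Real.exp (t*x)) (gammaMeasure ν 1) :=
      hIt.const_mul (Real.exp (-(t*s)))
    have hs2' : Integrable (fun x => Real.exp (t*s) * Real.exp (-t*x)) (gammaMeasure ν 1) :=
      hIt'.const_mul (Real.exp (t*s))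
    have hsum2 : Integrable (fun x => Real.exp (-(t*s)) * Real.exp (t*x)
        + Real.exp (t*s) * Real.exp (-t*x)) (gammaMeasure ν 1) := hs1'.add hs2'
    have hsum3 : Integrable (fun x => D * (Real.exp (-(t*s)) * Real.exp (t*x)
        + Real.exp (t*s) * Real.exp (-t*x))) (gammaMeasure ν 1) := hsum2.const_mul D
    rw [integral_add (integrable_const _) hsum3, integral_const, integral_const_mul,
      integral_add hs1' hs2', integral_const_mul, integral_const_mul, hMt, hMt']
    simp
  have hDval : D = ((2*k).factorial : ℝ) * 4^k * q⁻¹^k := by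
    rw [hDdef, hN4, show ((2:ℝ)*q)^(2*k) = 4^k * q^(2*k) by rw [mul_pow, pow_mul]; norm_num,
      inv_pow]
    field_simp
    ring
  have hDnn : (0:ℝ) ≤ D := by rw [hDval]; positivity
  have hqk : (0:ℝ) ≤ q⁻¹^k := by positivity
  have hfinal : q⁻¹^k + D * (Real.exp (-(t*s)) * (1-t)^(-ν) + Real.exp (t*s) * (1+t)^(-ν))
      ≤ (1 + 2 * Real.exp 1 * ((2*k).factorial : ℝ) * 4^k) * q⁻¹^k := by
    have h5 : Real.exp (-(t*s)) * (1-t)^(-ν) + Real.exp (t*s) * (1+t)^(-ν) ≤ 2 * Real.exp 1 := by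
      linarith [boundA, boundB]
    have h6 := mul_le_mul_of_nonneg_left h5 hDnn
    calc q⁻¹^k + D * (Real.exp (-(t*s)) * (1-t)^(-ν) + Real.exp (t*s) * (1+t)^(-ν))
        ≤ q⁻¹^k + D * (2 * Real.exp 1) := by linarith [h6]
      _ = q⁻¹^k + (((2*k).factorial : ℝ) * 4^k * q⁻¹^k) * (2 * Real.exp 1) := by rw [hDval]
      _ = (1 + 2 * Real.exp 1 * ((2*k).factorial : ℝ) * 4^k) * q⁻¹^k := by ring
  have hqN : q⁻¹^k = N ^ (-(k:ℝ)/4) := by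
    have hq4 : q = N ^ ((1:ℝ)/4) := by
      rw [hqdef, hsdef, Real.sqrt_eq_rpow, Real.sqrt_eq_rpow, ← Real.rpow_mul hN0.le]
      norm_num
    rw [hq4, ← Real.rpow_neg_one (N ^ ((1:ℝ)/4)), ← Real.rpow_mul hN0.le,
      ← Real.rpow_natCast (N ^ ((1:ℝ)/4 * -1)) k, ← Real.rpow_mul hN0.le]
    congr 1
    ring
  calc ∫ x, |1 - x / s|^k ∂(gammaMeasure ν 1)
      ≤ ∫ x, (q⁻¹^k + D * (Real.exp (-(t*s)) * Real.exp (t*x) + Real.exp (t*s) * Real.exp (-t*x)))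
          ∂(gammaMeasure ν 1) := hle
    _ = q⁻¹^k + D * (Real.exp (-(t*s)) * (1-t)^(-ν) + Real.exp (t*s) * (1+t)^(-ν)) := hgval
    _ ≤ (1 + 2 * Real.exp 1 * ((2*k).factorial : ℝ) * 4^k) * q⁻¹^k := hfinal
    _ = (1 + 2 * Real.exp 1 * ((2*k).factorial : ℝ) * 4^k) * N ^ (-(k:ℝ)/4) := by rw [hqN]
end

section
/- Let ν > 0 and let X have the Gamma distribution of shape ν and rate 1. Then the random variable log X is integrable and square-integrable, E[log X] = Ψ₀(ν) where Ψ₀ = Γ'/Γ is the digamma function, and Var[log X] = Ψ₁(ν) where Ψ₁ = Ψ₀' is the trigamma function. Equivalently, ∫₀^∞ (log x) x^{ν−1} e^{−x} dx = Γ'(ν) and ∫₀^∞ (log x − Γ'(ν)/Γ(ν))² x^{ν−1} e^{−x}/Γ(ν) dx equals the derivative of ν ↦ Γ'(ν)/Γ(ν) at ν. -/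
open scoped NNReal ENNReal
open MeasureTheory ProbabilityTheory Real
open MeasureTheory ProbabilityTheory Real Set

/-- `|log x|^n ≤ (n/δ)^n (x^δ + x^{-δ})` for `x > 0`. -/
lemma my_abs_log_pow_le (n : ℕ) (hn : n ≠ 0) {δ x : ℝ} (hδ : 0 < δ) (hx : 0 < x) :
    |Real.log x| ^ n ≤ ((n : ℝ) / δ) ^ n * (x ^ δ + x ^ (-δ)) := by
  have hnpos : (0 : ℝ) < n := Nat.cast_pos.mpr (Nat.pos_of_ne_zero hn)
  have key : ∀ y : ℝ, 1 ≤ y → Real.log y ^ n ≤ ((n : ℝ) / δ) ^ n * y ^ δ := by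
    intro y hy
    have hy0 : 0 < y := lt_of_lt_of_le one_pos hy
    have h1 : Real.log y = ((n : ℝ) / δ) * Real.log (y ^ (δ / n)) := by
      rw [Real.log_rpow hy0]
      field_simp
    have h2 : Real.log (y ^ (δ / n)) ≤ y ^ (δ / n) := by
      have := Real.log_le_sub_one_of_pos (Real.rpow_pos_of_pos hy0 (δ / n))
      linarith
    have h3 : Real.log y ≤ ((n : ℝ) / δ) * y ^ (δ / n) := by
      rw [h1]
      exact mul_le_mul_of_nonneg_left h2 (by positivity)
    calc Real.log y ^ n ≤ (((n : ℝ) / δ) * y ^ (δ / n)) ^ n := by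
          apply pow_le_pow_left₀ (Real.log_nonneg hy) h3
      _ = ((n : ℝ) / δ) ^ n * (y ^ (δ / n)) ^ n := mul_pow _ _ _
      _ = ((n : ℝ) / δ) ^ n * y ^ δ := by
          rw [← Real.rpow_natCast (y ^ (δ / n)) n, ← Real.rpow_mul hy0.le]
          congr 2
          field_simp
  have hd1 : 0 ≤ x ^ δ := (Real.rpow_pos_of_pos hx _).le
  have hd2 : 0 ≤ x ^ (-δ) := (Real.rpow_pos_of_pos hx _).le
  have hC : 0 ≤ ((n : ℝ) / δ) ^ n := by positivity
  rcases le_or_gt 1 x with h | h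
  · have := key x h
    rw [abs_of_nonneg (Real.log_nonneg h)]
    nlinarith
  · have hinv : 1 ≤ x⁻¹ := (one_le_inv_iff₀.mpr ⟨hx, h.le⟩)
    have hxi : x⁻¹ ^ δ = x ^ (-δ) := by
      rw [Real.inv_rpow hx.le, Real.rpow_neg hx.le]
    rw [abs_of_nonpos (Real.log_nonpos hx.le h.le)]
    calc (-Real.log x) ^ n ≤ ((n : ℝ) / δ) ^ n * x⁻¹ ^ δ := by
          have := key x⁻¹ hinv; rwa [Real.log_inv] at this
      _ = ((n : ℝ) / δ) ^ n * x ^ (-δ) := by rw [hxi]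
      _ ≤ ((n : ℝ) / δ) ^ n * (x ^ δ + x ^ (-δ)) := by nlinarith

/-- measurability of the main integrand -/
lemma my_meas (c : ℝ) (n : ℕ) :
    AEStronglyMeasurable (fun x : ℝ => Real.log x ^ n * (x ^ (c - 1) * Real.exp (-x)))
      (volume.restrict (Set.Ioi 0)) := by
  exact (((Real.measurable_log.pow_const n).mul
    ((measurable_id.pow_const (c-1)).mul (measurable_id.neg.exp))).aestronglyMeasurable)

lemma my_integrableOn_abs (n : ℕ) {c : ℝ} (hc : 0 < c) :
    IntegrableOn (fun x : ℝ => |Real.log x| ^ n * (x ^ (c - 1) * Real.exp (-x)))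
      (Set.Ioi 0) := by
  rcases Nat.eq_zero_or_pos n with rfl | hn
  · simpa [mul_comm] using Real.GammaIntegral_convergent hc
  have hn' : n ≠ 0 := hn.ne'
  set δ : ℝ := c / 2 with hδdef
  have hδ : 0 < δ := by positivity
  have h1 : (0 : ℝ) < c + δ := by linarith
  have h2 : (0 : ℝ) < c - δ := by simp [hδdef]; linarith
  have hbint : IntegrableOn
      (fun x : ℝ => ((n : ℝ) / δ) ^ n *
        (Real.exp (-x) * x ^ (c + δ - 1) + Real.exp (-x) * x ^ (c - δ - 1))) (Set.Ioi 0) :=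
    (((Real.GammaIntegral_convergent h1).add (Real.GammaIntegral_convergent h2)).const_mul _)
  apply hbint.mono'
  · exact ((Real.measurable_log.abs.pow_const n).mul
      ((measurable_id.pow_const (c-1)).mul (measurable_id.neg.exp))).aestronglyMeasurable
  · filter_upwards [ae_restrict_mem measurableSet_Ioi] with x (hx : (0:ℝ) < x)
    have hb := my_abs_log_pow_le n hn' hδ hx
    have hpos : 0 ≤ x ^ (c - 1) * Real.exp (-x) := by positivity
    rw [Real.norm_eq_abs, abs_of_nonneg (by positivity)]
    have e1 : x ^ δ * x ^ (c - 1) = x ^ (c + δ - 1) := by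
      rw [← Real.rpow_add hx]; ring_nf
    have e2 : x ^ (-δ) * x ^ (c - 1) = x ^ (c - δ - 1) := by
      rw [← Real.rpow_add hx]; ring_nf
    calc |Real.log x| ^ n * (x ^ (c - 1) * Real.exp (-x))
        ≤ ((n : ℝ) / δ) ^ n * (x ^ δ + x ^ (-δ)) * (x ^ (c - 1) * Real.exp (-x)) :=
          mul_le_mul_of_nonneg_right hb hpos
      _ = ((n : ℝ) / δ) ^ n *
          (Real.exp (-x) * x ^ (c + δ - 1) + Real.exp (-x) * x ^ (c - δ - 1)) := by
          rw [← e1, ← e2]; ring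

lemma my_integrableOn (n : ℕ) {c : ℝ} (hc : 0 < c) :
    IntegrableOn (fun x : ℝ => Real.log x ^ n * (x ^ (c - 1) * Real.exp (-x)))
      (Set.Ioi 0) := by
  apply (my_integrableOn_abs n hc).mono' (my_meas c n)
  filter_upwards [ae_restrict_mem measurableSet_Ioi] with x (hx : (0:ℝ) < x)
  rw [Real.norm_eq_abs, abs_mul, abs_pow, abs_of_nonneg (a := x ^ (c-1) * Real.exp (-x)) (by positivity)]

lemma my_hasDerivAt (n : ℕ) {t : ℝ} (ht : 0 < t) :
    HasDerivAt (fun s => ∫ x in Set.Ioi (0:ℝ), Real.log x ^ n * (x ^ (s - 1) * Real.exp (-x)))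
      (∫ x in Set.Ioi (0:ℝ), Real.log x ^ (n + 1) * (x ^ (t - 1) * Real.exp (-x))) t := by
  have key := hasDerivAt_integral_of_dominated_loc_of_deriv_le
    (F := fun s x => Real.log x ^ n * (x ^ (s - 1) * Real.exp (-x)))
    (F' := fun s x => Real.log x ^ (n + 1) * (x ^ (s - 1) * Real.exp (-x)))
    (x₀ := t) (μ := volume.restrict (Set.Ioi 0))
    (bound := fun x => |Real.log x| ^ (n + 1) * (x ^ (t / 2 - 1) * Real.exp (-x))
      + |Real.log x| ^ (n + 1) * (x ^ (3 * t / 2 - 1) * Real.exp (-x)))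
    (Metric.ball_mem_nhds t (half_pos ht))
    (Filter.Eventually.of_forall fun s => my_meas (s) n)
    (my_integrableOn n ht)
    (my_meas t (n + 1))
    ?_ ?_ ?_
  · exact key.2
  · -- bound
    filter_upwards [ae_restrict_mem measurableSet_Ioi] with x (hx : (0:ℝ) < x)
    intro s hs
    rw [Metric.mem_ball, Real.dist_eq, abs_lt] at hs
    have hs1 : t / 2 - 1 ≤ s - 1 := by linarith
    have hs2 : s - 1 ≤ 3 * t / 2 - 1 := by linarith
    have hxp : x ^ (s - 1) ≤ x ^ (t / 2 - 1) + x ^ (3 * t / 2 - 1) := by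
      rcases le_or_gt x 1 with h | h
      · have := Real.rpow_le_rpow_of_exponent_ge hx h hs1
        have h2 : (0:ℝ) ≤ x ^ (3 * t / 2 - 1) := (Real.rpow_pos_of_pos hx _).le
        linarith
      · have := Real.rpow_le_rpow_of_exponent_le h.le hs2
        have h2 : (0:ℝ) ≤ x ^ (t / 2 - 1) := (Real.rpow_pos_of_pos hx _).le
        linarith
    rw [Real.norm_eq_abs, abs_mul, abs_pow, abs_of_nonneg
      (a := x ^ (s - 1) * Real.exp (-x)) (by positivity)]
    calc |Real.log x| ^ (n + 1) * (x ^ (s - 1) * Real.exp (-x))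
        ≤ |Real.log x| ^ (n + 1) * ((x ^ (t / 2 - 1) + x ^ (3 * t / 2 - 1)) * Real.exp (-x)) := by
          apply mul_le_mul_of_nonneg_left _ (by positivity)
          exact mul_le_mul_of_nonneg_right hxp (Real.exp_pos _).le
      _ = _ := by ring
  · -- bound integrable
    exact (my_integrableOn_abs (n + 1) (half_pos ht)).add
      (my_integrableOn_abs (n + 1) (by linarith : (0:ℝ) < 3 * t / 2))
  · -- differentiability
    filter_upwards [ae_restrict_mem measurableSet_Ioi] with x (hx : (0:ℝ) < x)
    intro s _
    have h1 : HasDerivAt (fun s : ℝ => x ^ (s - 1)) (x ^ (s - 1) * Real.log x) s := by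
      have h2 : HasDerivAt (fun s : ℝ => (s - 1) * Real.log x) (Real.log x) s := by
        simpa using ((hasDerivAt_id s).sub_const 1).mul_const (Real.log x)
      have h3 := h2.exp
      have he : ∀ u : ℝ, Real.exp ((u - 1) * Real.log x) = x ^ (u - 1) := by
        intro u
        rw [Real.rpow_def_of_pos hx]; ring_nf
      simp only [he] at h3
      simpa [he, mul_comm] using h3
    have := (h1.mul_const (Real.exp (-x))).const_mul (Real.log x ^ n)
    convert this using 1
    · rfl
    ring


/-- For `X ~ Gamma(ν, 1)`, `log X` is integrable and square-integrable,
`E[log X] = Ψ₀(ν) = Γ'(ν)/Γ(ν)` and `Var[log X] = Ψ₁(ν) = Ψ₀'(ν)`; equivalently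
`∫₀^∞ (log x) x^{ν-1} e^{-x} dx = Γ'(ν)` and the variance integral equals the derivative
of the digamma function at `ν`. -/
theorem stmt_4 (ν : ℝ) (hν : 0 < ν) :
    Integrable Real.log (gammaMeasure ν 1) ∧
    MemLp Real.log 2 (gammaMeasure ν 1) ∧
    (∫ x, Real.log x ∂(gammaMeasure ν 1) = deriv Real.Gamma ν / Real.Gamma ν) ∧
    (variance Real.log (gammaMeasure ν 1)
        = deriv (fun t : ℝ => deriv Real.Gamma t / Real.Gamma t) ν) ∧
    (∫ x in Set.Ioi (0 : ℝ), Real.log x * x ^ (ν - 1) * Real.exp (-x)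
        = deriv Real.Gamma ν) ∧
    (∫ x in Set.Ioi (0 : ℝ),
        (Real.log x - deriv Real.Gamma ν / Real.Gamma ν) ^ 2
          * (x ^ (ν - 1) * Real.exp (-x) / Real.Gamma ν)
        = deriv (fun t : ℝ => deriv Real.Gamma t / Real.Gamma t) ν) := by
  haveI : IsProbabilityMeasure (gammaMeasure ν 1) := isProbabilityMeasure_gammaMeasure hν one_pos
  have hΓpos : 0 < Real.Gamma ν := Real.Gamma_pos_of_pos hν
  set Γν := Real.Gamma ν with hΓν
  set M : ℕ → ℝ := fun k => ∫ x in Set.Ioi (0:ℝ), Real.log x ^ k * (x ^ (ν - 1) * Real.exp (-x))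
    with hM
  -- Gamma equals the parametric integral near ν
  have hmemnhds : Set.Ioi (0:ℝ) ∈ nhds ν := Ioi_mem_nhds hν
  have hΓint : ∀ s : ℝ, 0 < s →
      Real.Gamma s = ∫ x in Set.Ioi (0:ℝ), Real.log x ^ 0 * (x ^ (s - 1) * Real.exp (-x)) := by
    intro s hs
    rw [Real.Gamma_eq_integral hs]
    apply setIntegral_congr_fun measurableSet_Ioi
    intro x _
    simp [mul_comm]
  -- first derivative
  have hΓderiv : ∀ s : ℝ, 0 < s → HasDerivAt Real.Gamma
      (∫ x in Set.Ioi (0:ℝ), Real.log x ^ 1 * (x ^ (s - 1) * Real.exp (-x))) s := by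
    intro s hs
    apply (my_hasDerivAt 0 hs).congr_of_eventuallyEq
    filter_upwards [Ioi_mem_nhds hs] with u (hu : (0:ℝ) < u)
    exact hΓint u hu
  have hd1 : deriv Real.Gamma ν = M 1 := (hΓderiv ν hν).deriv
  -- second derivative
  have hDD : HasDerivAt (deriv Real.Gamma) (M 2) ν := by
    apply (my_hasDerivAt 1 hν).congr_of_eventuallyEq
    filter_upwards [hmemnhds] with u (hu : (0:ℝ) < u)
    exact (hΓderiv u hu).deriv
  have hdig : HasDerivAt (fun t : ℝ => deriv Real.Gamma t / Real.Gamma t)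
      ((M 2 * Γν - deriv Real.Gamma ν * M 1) / Γν ^ 2) ν :=
    hDD.div (hΓderiv ν hν) hΓpos.ne'
  have hdigval : deriv (fun t : ℝ => deriv Real.Gamma t / Real.Gamma t) ν
      = (M 2 * Γν - M 1 * M 1) / Γν ^ 2 := by
    rw [hdig.deriv, hd1]
  -- measure rewriting
  set g : ℝ → ℝ := fun x => x ^ (ν - 1) * Real.exp (-x) / Γν with hg
  set gn : ℝ → ℝ≥0 := fun x => (g x).toNNReal with hgn
  have hgnmeas : Measurable gn := by
    apply Measurable.real_toNNReal
    exact ((measurable_id.pow_const (ν - 1)).mul measurable_id.neg.exp).div_const Γν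
  have hmeq : gammaMeasure ν 1
      = (volume.restrict (Set.Ioi 0)).withDensity (fun x => ENNReal.ofReal (g x)) := by
    have h0 : ∀ᵐ x : ℝ, x ≠ (0:ℝ) := by
      rw [ae_iff]
      have hset : {x : ℝ | ¬ x ≠ 0} = {0} := by ext x; simp
      rw [hset]
      exact measure_singleton 0
    have hae : gammaPDF ν 1 =ᵐ[volume]
        (Set.Ioi (0:ℝ)).indicator (fun x => ENNReal.ofReal (g x)) := by
      filter_upwards [h0] with x hx
      rcases hx.lt_or_gt with h | h
      · rw [gammaPDF_of_neg h, Set.indicator_of_notMem (by simp [h.not_gt] : x ∉ Set.Ioi (0:ℝ))]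
      · rw [gammaPDF_of_nonneg h.le, Set.indicator_of_mem (Set.mem_Ioi.mpr h)]
        congr 1
        rw [hg]
        simp only [Real.one_rpow, one_mul]
        ring_nf
        rw [hΓν]; ring
    rw [gammaMeasure, withDensity_congr_ae hae, withDensity_indicator measurableSet_Ioi]
  have hofr : (fun x => ENNReal.ofReal (g x)) = (fun x => ((gn x : ℝ≥0) : ℝ≥0∞)) := rfl
  have hsmul_eq : ∀ f : ℝ → ℝ, (fun x => (gn x : ℝ) • f x)
      =ᵐ[volume.restrict (Set.Ioi 0)] (fun x => g x * f x) := by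
    intro f
    filter_upwards [ae_restrict_mem measurableSet_Ioi] with x (hx : (0:ℝ) < x)
    have hgx : 0 ≤ g x := by rw [hg]; positivity
    rw [smul_eq_mul, hgn, Real.coe_toNNReal _ hgx]
  have hInt_iff : ∀ f : ℝ → ℝ, Integrable f (gammaMeasure ν 1) ↔
      IntegrableOn (fun x => g x * f x) (Set.Ioi 0) := by
    intro f
    rw [hmeq, hofr, integrable_withDensity_iff_integrable_coe_smul hgnmeas]
    exact integrable_congr (hsmul_eq f)
  have hInt_eq : ∀ f : ℝ → ℝ, ∫ x, f x ∂(gammaMeasure ν 1)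
      = ∫ x in Set.Ioi (0:ℝ), g x * f x := by
    intro f
    rw [hmeq, hofr, integral_withDensity_eq_integral_smul hgnmeas]
    exact integral_congr_ae (hsmul_eq f)
  -- integrabilities
  have hglog : (fun x : ℝ => g x * Real.log x)
      = fun x => (1 / Γν) * (Real.log x ^ 1 * (x ^ (ν - 1) * Real.exp (-x))) := by
    funext x; rw [hg, pow_one]; ring
  have hglog2 : (fun x : ℝ => g x * Real.log x ^ 2)
      = fun x => (1 / Γν) * (Real.log x ^ 2 * (x ^ (ν - 1) * Real.exp (-x))) := by
    funext x; rw [hg]; ring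
  have hint_log : Integrable Real.log (gammaMeasure ν 1) := by
    rw [hInt_iff]
    rw [show (fun x => g x * Real.log x) = _ from hglog]
    exact (my_integrableOn 1 hν).const_mul _
  have hint_log2 : Integrable (fun x => Real.log x ^ 2) (gammaMeasure ν 1) := by
    rw [hInt_iff]
    rw [show (fun x => g x * Real.log x ^ 2) = _ from hglog2]
    exact (my_integrableOn 2 hν).const_mul _
  have hmem : MemLp Real.log 2 (gammaMeasure ν 1) := by
    rw [memLp_two_iff_integrable_sq Real.measurable_log.aestronglyMeasurable]
    exact hint_log2
  -- moments
  have hmean : ∫ x, Real.log x ∂(gammaMeasure ν 1) = M 1 / Γν := by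
    rw [hInt_eq Real.log, show (fun x => g x * Real.log x) = _ from hglog,
      integral_const_mul, hM]
    ring
  have hm2 : ∫ x, Real.log x ^ 2 ∂(gammaMeasure ν 1) = M 2 / Γν := by
    rw [hInt_eq (fun x => Real.log x ^ 2),
      show (fun x => g x * Real.log x ^ 2) = _ from hglog2, integral_const_mul, hM]
    ring
  have hmean' : ∫ x, Real.log x ∂(gammaMeasure ν 1) = deriv Real.Gamma ν / Γν := by
    rw [hmean, hd1]
  -- variance
  have hvar : variance Real.log (gammaMeasure ν 1)
      = deriv (fun t : ℝ => deriv Real.Gamma t / Real.Gamma t) ν := by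
    rw [variance_eq_sub hmem, hdigval]
    have : (gammaMeasure ν 1)[Real.log ^ 2] = M 2 / Γν := by
      rw [← hm2]; congr 1
    rw [this, hmean]
    field_simp
  refine ⟨hint_log, hmem, hmean', hvar, ?_, ?_⟩
  · rw [hd1, hM]
    apply setIntegral_congr_fun measurableSet_Ioi
    intro x _
    simp [pow_one]; ring
  · have hlast : ∫ x in Set.Ioi (0 : ℝ),
        (Real.log x - deriv Real.Gamma ν / Γν) ^ 2 * (x ^ (ν - 1) * Real.exp (-x) / Γν)
        = ∫ x, (Real.log x - deriv Real.Gamma ν / Γν) ^ 2 ∂(gammaMeasure ν 1) := by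
      rw [hInt_eq (fun x => (Real.log x - deriv Real.Gamma ν / Γν) ^ 2)]
      apply setIntegral_congr_fun measurableSet_Ioi
      intro x _
      rw [hg]; ring
    rw [hlast, ← hvar, variance_eq_integral hmem.aemeasurable]
    congr 1
    funext x
    simp [hmean']
end

section
/- There exists a constant C > 0 such that for every integer n ≥ 1, if X_n has the Gamma distribution of shape √n + 1/2 and rate 1, then Var[log X_n] ≤ C n^{−1/2}. In particular, for u_n = −log X_n + (1/2) log n one has Var[u_n] ≤ C n^{−1/2}. -/
open MeasureTheory ProbabilityTheory Real Set
open scoped ENNReal NNReal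

namespace Stmt5Aux

lemma log_le_half {u : ℝ} (hu : 1 ≤ u) : Real.log u ≤ (u - u⁻¹) / 2 := by
  set f : ℝ → ℝ := fun u => (u - u⁻¹) / 2 - Real.log u with hf
  have hmono : MonotoneOn f (Ici 1) := by
    have hderiv : ∀ x ∈ interior (Ici (1:ℝ)), 0 ≤ deriv f x := by
      intro x hx
      rw [interior_Ici] at hx
      have hx0 : (0:ℝ) < x := lt_trans one_pos hx
      have h1 : HasDerivAt f ((1 - -(x^2)⁻¹)/2 - x⁻¹) x :=
        (((hasDerivAt_id x).sub (hasDerivAt_inv hx0.ne')).div_const 2).sub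
          (Real.hasDerivAt_log hx0.ne')
      rw [h1.deriv]
      have h2 : (x^2)⁻¹ = (x⁻¹)^2 := by rw [inv_pow]
      nlinarith [sq_nonneg (1 - x⁻¹)]
    refine monotoneOn_of_deriv_nonneg (convex_Ici 1) ?_ ?_ hderiv
    · apply ContinuousOn.sub
      · exact (continuousOn_id.sub (continuousOn_inv₀.mono
          (by intro x hx; simp at hx ⊢; positivity))).div_const 2
      · exact Real.continuousOn_log.mono (by intro x hx; simp at hx ⊢; positivity)
    · intro x hx
      rw [interior_Ici] at hx
      have hx0 : (0:ℝ) < x := lt_trans one_pos hx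
      exact ((((hasDerivAt_id x).sub (hasDerivAt_inv hx0.ne')).div_const 2).sub
        (Real.hasDerivAt_log hx0.ne')).differentiableAt.differentiableWithinAt
  have h0 : f 1 ≤ f u := hmono (by simp) (by simpa using hu) hu
  have h1 : f 1 = 0 := by simp [hf]
  rw [h1] at h0
  simpa [hf, sub_nonneg] using h0

lemma sq_log_le_aux {t : ℝ} (ht : 1 ≤ t) : (Real.log t)^2 ≤ t + t⁻¹ - 2 := by
  have ht0 : (0:ℝ) < t := lt_of_lt_of_le one_pos ht
  have hs1 : 1 ≤ Real.sqrt t := by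
    rw [show (1:ℝ) = Real.sqrt 1 by simp]
    exact Real.sqrt_le_sqrt ht
  have hs0 : (0:ℝ) < Real.sqrt t := lt_of_lt_of_le one_pos hs1
  have h1 : Real.log t ≤ Real.sqrt t - (Real.sqrt t)⁻¹ := by
    have := log_le_half hs1
    rw [Real.log_sqrt ht0.le] at this
    linarith
  have h2 : 0 ≤ Real.log t := Real.log_nonneg ht
  have h3 : (Real.log t)^2 ≤ (Real.sqrt t - (Real.sqrt t)⁻¹)^2 :=
    pow_le_pow_left₀ h2 h1 2
  have h4 : (Real.sqrt t - (Real.sqrt t)⁻¹)^2 = t + t⁻¹ - 2 := by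
    have hsq : Real.sqrt t * Real.sqrt t = t := Real.mul_self_sqrt ht0.le
    have hi : Real.sqrt t * (Real.sqrt t)⁻¹ = 1 := mul_inv_cancel₀ hs0.ne'
    rw [sub_sq, inv_pow, Real.sq_sqrt ht0.le]
    linear_combination (-2) * hi
  linarith

lemma sq_log_le {t : ℝ} (ht : 0 < t) : (Real.log t)^2 ≤ t + t⁻¹ - 2 := by
  rcases le_total 1 t with h | h
  · exact sq_log_le_aux h
  · have ht1 : 1 ≤ t⁻¹ := (one_le_inv₀ ht).mpr h
    have := sq_log_le_aux ht1
    rw [Real.log_inv, neg_sq, inv_inv] at this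
    linarith

lemma pdf_eq_pos {ν x : ℝ} (hx : 0 < x) :
    gammaPDFReal ν 1 x = (Real.Gamma ν)⁻¹ * (Real.exp (-x) * x ^ (ν - 1)) := by
  simp only [gammaPDFReal, if_pos hx.le, Real.one_rpow, one_mul]
  ring

lemma pdf_zero_of_nonpos {ν x : ℝ} (hν : 1 < ν) (hx : x ≤ 0) : gammaPDFReal ν 1 x = 0 := by
  rcases lt_or_eq_of_le hx with h | h
  · simp [gammaPDFReal, not_le.mpr h]
  · subst h
    have : (0:ℝ) ^ (ν - 1) = 0 := Real.zero_rpow (sub_ne_zero.mpr (by linarith))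
    simp [gammaPDFReal, this]

lemma eqOn_moment {ν t : ℝ} :
    EqOn (fun x => gammaPDFReal ν 1 x * x ^ t)
      (fun x => (Real.Gamma ν)⁻¹ * (Real.exp (-x) * x ^ (ν + t - 1))) (Ioi 0) := by
  intro x hx
  have hx0 : (0:ℝ) < x := hx
  simp only
  rw [pdf_eq_pos hx0, show ν + t - 1 = (ν - 1) + t by ring, Real.rpow_add hx0]
  ring

lemma integrableOn_moment {ν t : ℝ} (ht : 0 < ν + t) :
    IntegrableOn (fun x => gammaPDFReal ν 1 x * x ^ t) (Ioi 0) :=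
  IntegrableOn.congr_fun ((Real.GammaIntegral_convergent ht).const_mul (Real.Gamma ν)⁻¹)
    (fun x hx => (eqOn_moment hx).symm) measurableSet_Ioi

lemma integral_moment {ν t : ℝ} (ht : 0 < ν + t) :
    ∫ x in Ioi 0, gammaPDFReal ν 1 x * x ^ t = Real.Gamma (ν + t) / Real.Gamma ν := by
  rw [setIntegral_congr_fun measurableSet_Ioi eqOn_moment, integral_const_mul,
    ← Real.Gamma_eq_integral ht, inv_mul_eq_div]

lemma gammaMeasure_eq (ν : ℝ) :
    gammaMeasure ν 1 = volume.withDensity (fun x => ((gammaPDFReal ν 1 x).toNNReal : ℝ≥0∞)) := rfl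

lemma integral_gamma {ν : ℝ} (g : ℝ → ℝ) (hν : 1 < ν) :
    ∫ x, g x ∂(gammaMeasure ν 1) = ∫ x in Ioi 0, gammaPDFReal ν 1 x * g x := by
  rw [gammaMeasure_eq, integral_withDensity_eq_integral_smul
    ((measurable_gammaPDFReal ν 1).real_toNNReal) g]
  have h1 : (fun x => (gammaPDFReal ν 1 x).toNNReal • g x)
      = fun x => gammaPDFReal ν 1 x * g x := by
    funext x
    rw [NNReal.smul_def, smul_eq_mul,
      Real.coe_toNNReal _ (gammaPDFReal_nonneg (by linarith) one_pos x)]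
  rw [h1, ← setIntegral_eq_integral_of_forall_compl_eq_zero (s := Ioi 0)]
  intro x hx
  rw [pdf_zero_of_nonpos hν (by simpa using hx), zero_mul]

lemma integrable_gamma {ν : ℝ} (g : ℝ → ℝ) (hν : 1 < ν)
    (hint : IntegrableOn (fun x => gammaPDFReal ν 1 x * g x) (Ioi 0)) :
    Integrable g (gammaMeasure ν 1) := by
  rw [gammaMeasure, integrable_withDensity_iff
    (show Measurable (gammaPDF ν 1) from (measurable_gammaPDFReal ν 1).ennreal_ofReal)
    (ae_of_all _ fun x => ENNReal.ofReal_lt_top)]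
  have h1 : ∀ x, g x * (gammaPDF ν 1 x).toReal = gammaPDFReal ν 1 x * g x := by
    intro x
    rw [gammaPDF, ENNReal.toReal_ofReal (gammaPDFReal_nonneg (by linarith) one_pos x), mul_comm]
  simp_rw [h1]
  rw [← integrableOn_univ, ← Iic_union_Ioi (a := (0:ℝ)), integrableOn_union]
  constructor
  · refine (integrableOn_zero).congr_fun (fun x hx => ?_) measurableSet_Iic
    rw [pdf_zero_of_nonpos hν hx, zero_mul]
  · exact hint

lemma ae_pos_gamma {ν : ℝ} (hν : 1 < ν) : ∀ᵐ x ∂(gammaMeasure ν 1), 0 < x := by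
  rw [ae_iff]
  have h1 : {x : ℝ | ¬ 0 < x} = Iic 0 := by ext x; simp
  rw [h1, gammaMeasure, withDensity_apply _ measurableSet_Iic]
  rw [setLIntegral_congr_fun_ae measurableSet_Iic
    (ae_of_all _ (fun x (hx : x ≤ 0) => by
      rw [gammaPDF, pdf_zero_of_nonpos hν hx, ENNReal.ofReal_zero]))]
  simp

lemma integrable_id_gamma {ν : ℝ} (hν : 1 < ν) :
    Integrable (fun x : ℝ => x) (gammaMeasure ν 1) := by
  refine integrable_gamma _ hν ?_
  have h := integrableOn_moment (ν := ν) (t := 1) (by linarith)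
  simpa [Real.rpow_one] using h

lemma integral_id_gamma {ν : ℝ} (hν : 1 < ν) :
    ∫ x, x ∂(gammaMeasure ν 1) = ν := by
  rw [integral_gamma _ hν]
  have h1 : ∫ x in Ioi 0, gammaPDFReal ν 1 x * x
      = ∫ x in Ioi 0, gammaPDFReal ν 1 x * x ^ (1:ℝ) := by
    simp [Real.rpow_one]
  rw [h1, integral_moment (by linarith), Real.Gamma_add_one (by positivity : ν ≠ 0)]
  rw [mul_div_assoc, div_self (Real.Gamma_pos_of_pos (by linarith)).ne', mul_one]

lemma integrable_inv_gamma {ν : ℝ} (hν : 1 < ν) :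
    Integrable (fun x : ℝ => x⁻¹) (gammaMeasure ν 1) := by
  refine integrable_gamma _ hν ?_
  have h := integrableOn_moment (ν := ν) (t := -1) (by linarith)
  simpa [Real.rpow_neg_one] using h

lemma integral_inv_gamma {ν : ℝ} (hν : 1 < ν) :
    ∫ x, x⁻¹ ∂(gammaMeasure ν 1) = (ν - 1)⁻¹ := by
  rw [integral_gamma _ hν]
  have h1 : ∫ x in Ioi 0, gammaPDFReal ν 1 x * x⁻¹
      = ∫ x in Ioi 0, gammaPDFReal ν 1 x * x ^ (-1:ℝ) := by
    simp [Real.rpow_neg_one]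
  have hν1 : (0:ℝ) < ν - 1 := by linarith
  rw [h1, integral_moment (by linarith)]
  have h2 : Real.Gamma ν = (ν - 1) * Real.Gamma (ν - 1) := by
    rw [show ν = (ν - 1) + 1 by ring, Real.Gamma_add_one hν1.ne']
    ring_nf
  rw [show ν + -1 = ν - 1 by ring, h2]
  rw [div_mul_eq_div_div_swap, div_self (Real.Gamma_pos_of_pos hν1).ne']
  rw [one_div]

lemma var_add_const {μ : Measure ℝ} [IsProbabilityMeasure μ] {f : ℝ → ℝ}
    (hf : MemLp f 2 μ) (c : ℝ) :
    variance (f + fun _ => c) μ = variance f μ := by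
  rw [variance_eq_sub (hf.add (memLp_const c)), variance_eq_sub hf]
  simp only [Pi.pow_apply, Pi.add_apply]
  have hfi := hf.integrable one_le_two
  have he : ∀ x, (f x + c)^2 = f x^2 + ((2*c) * f x + c^2) := fun x => by ring
  simp_rw [he]
  have hg1 : Integrable (fun x => (2*c) * f x + c^2) μ :=
    (hfi.const_mul (2*c)).add (integrable_const _)
  rw [integral_add hf.integrable_sq hg1,
    integral_add (hfi.const_mul (2*c)) (integrable_const _),
    integral_add hfi (integrable_const c),
    integral_const_mul]
  simp only [integral_const, measure_univ, probReal_univ, ENNReal.toReal_one, smul_eq_mul, one_mul]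
  ring

end Stmt5Aux

open Stmt5Aux

/-- There is `C > 0` such that for all `n ≥ 1`, the variance of `log X_n`
under `Gamma(√n + 1/2, 1)` is at most `C n^{-1/2}`; in particular, the variance of
`u_n = -log X_n + (1/2) log n` satisfies the same bound. -/
theorem stmt_5 :
    ∃ C : ℝ, 0 < C ∧ ∀ n : ℕ, 1 ≤ n →
      variance Real.log (gammaMeasure (Real.sqrt n + 1 / 2) 1)
          ≤ C * (n : ℝ) ^ (-(1 : ℝ) / 2) ∧
      variance (fun x : ℝ => -Real.log x + (1 / 2) * Real.log n)
          (gammaMeasure (Real.sqrt n + 1 / 2) 1)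
          ≤ C * (n : ℝ) ^ (-(1 : ℝ) / 2) := by
  refine ⟨2, two_pos, fun n hn => ?_⟩
  set ν : ℝ := Real.sqrt n + 1 / 2 with hνdef
  have hn1 : (1:ℝ) ≤ (n:ℝ) := by exact_mod_cast hn
  have hs1 : 1 ≤ Real.sqrt n := by
    rw [show (1:ℝ) = Real.sqrt 1 by simp]
    exact Real.sqrt_le_sqrt hn1
  have hν : 1 < ν := by rw [hνdef]; linarith
  have hν0 : (0:ℝ) < ν := by linarith
  set μ : Measure ℝ := gammaMeasure ν 1 with hμdef
  haveI : IsProbabilityMeasure μ := isProbabilityMeasure_gammaMeasure hν0 one_pos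
  set L : ℝ → ℝ := fun x => Real.log x - Real.log ν with hLdef
  set B : ℝ → ℝ := fun x => ν⁻¹ * x + ν * x⁻¹ - 2 with hBdef
  have hB1 : Integrable (fun x : ℝ => ν⁻¹ * x) μ := (integrable_id_gamma hν).const_mul ν⁻¹
  have hB2 : Integrable (fun x : ℝ => ν * x⁻¹) μ := (integrable_inv_gamma hν).const_mul ν
  have hB12 : Integrable (fun x : ℝ => ν⁻¹ * x + ν * x⁻¹) μ := hB1.add hB2
  have hB : Integrable B μ := hB12.sub (integrable_const 2)
  have hbound : ∀ᵐ x ∂μ, (L x)^2 ≤ B x := by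
    filter_upwards [ae_pos_gamma hν] with x hx
    have h1 : L x = Real.log (x / ν) := by
      rw [hLdef]; simp only
      rw [Real.log_div hx.ne' hν0.ne']
    have h2 : (Real.log (x/ν))^2 ≤ x/ν + (x/ν)⁻¹ - 2 := sq_log_le (div_pos hx hν0)
    have h3 : x/ν + (x/ν)⁻¹ - 2 = B x := by
      rw [hBdef]; simp only
      rw [div_eq_mul_inv, mul_inv, inv_inv]
      ring
    rw [h1]
    linarith
  have hmeasL : AEStronglyMeasurable L μ :=
    ((Real.measurable_log.sub measurable_const).aestronglyMeasurable)
  have hLsq : Integrable (fun x => (L x)^2) μ := by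
    refine Integrable.mono' hB
      (((Real.measurable_log.sub measurable_const).pow_const 2).aestronglyMeasurable) ?_
    filter_upwards [hbound] with x hx
    rwa [Real.norm_eq_abs, abs_of_nonneg (sq_nonneg _)]
  have hL2 : MemLp L 2 μ := (memLp_two_iff_integrable_sq hmeasL).mpr hLsq
  have hEL2 : ∫ x, (L x)^2 ∂μ ≤ (ν - 1)⁻¹ := by
    have h1 : ∫ x, (L x)^2 ∂μ ≤ ∫ x, B x ∂μ := integral_mono_ae hLsq hB hbound
    have h2 : ∫ x, B x ∂μ = ν⁻¹ * ν + ν * (ν-1)⁻¹ - 2 := by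
      rw [hBdef]
      rw [integral_sub hB12 (integrable_const 2),
        integral_add hB1 hB2,
        integral_const_mul, integral_const_mul, integral_id_gamma hν, integral_inv_gamma hν,
        integral_const]
      simp
    have h3 : ν⁻¹ * ν + ν * (ν-1)⁻¹ - 2 = (ν - 1)⁻¹ := by
      have hν1 : ν - 1 ≠ 0 := by intro h; rw [sub_eq_zero] at h; linarith
      field_simp
      ring
    linarith
  have heL : (L + fun _ => Real.log ν) = Real.log := by
    funext x
    simp only [Pi.add_apply, hLdef]
    ring
  have hlog2 : MemLp Real.log 2 μ := by
    have h := hL2.add (memLp_const (Real.log ν))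
    rwa [heL] at h
  have hvarlog : variance Real.log μ ≤ (ν - 1)⁻¹ := by
    have h1 : variance Real.log μ = variance L μ := by
      rw [← heL, var_add_const hL2]
    have h2 : variance L μ ≤ ∫ x, ((L ^ 2) x) ∂μ := variance_le_expectation_sq hmeasL
    have h3 : ∫ x, ((L ^ 2) x) ∂μ = ∫ x, (L x)^2 ∂μ := rfl
    rw [h1]
    calc variance L μ ≤ ∫ x, ((L ^ 2) x) ∂μ := h2
      _ = ∫ x, (L x)^2 ∂μ := h3
      _ ≤ (ν - 1)⁻¹ := hEL2
  have hfinal : (ν - 1)⁻¹ ≤ 2 * (n : ℝ) ^ (-(1 : ℝ)/2) := by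
    have hsn : (0:ℝ) < Real.sqrt n := by linarith
    have h1 : Real.sqrt n / 2 ≤ ν - 1 := by rw [hνdef]; linarith
    have h2 : (ν - 1)⁻¹ ≤ (Real.sqrt n / 2)⁻¹ := by
      apply inv_anti₀ (by positivity) h1
    have h3 : ((n : ℝ) ^ (-(1 : ℝ)/2)) = (Real.sqrt n)⁻¹ := by
      rw [neg_div, Real.rpow_neg (Nat.cast_nonneg n), ← Real.sqrt_eq_rpow]
    rw [h3]
    rw [div_eq_mul_inv, mul_inv, inv_inv, mul_comm] at h2
    linarith
  have hvar2 : variance (fun x : ℝ => -Real.log x + (1 / 2) * Real.log n) μ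
      = variance Real.log μ := by
    have hneg : MemLp (fun x : ℝ => -Real.log x) 2 μ := hlog2.neg
    have he0 : (fun x : ℝ => -Real.log x + (1 / 2) * Real.log n)
        = (fun x : ℝ => -Real.log x) + fun _ => (1 / 2) * Real.log n := rfl
    rw [he0, var_add_const hneg ((1/2) * Real.log n)]
    have he : (fun x : ℝ => -Real.log x) = fun x => (-1) * Real.log x := by
      funext x; ring
    rw [he, variance_const_mul]
    norm_num
  constructor
  · exact hvarlog.trans hfinal
  · rw [hvar2]
    exact hvarlog.trans hfinal
end

section
/- For every real a > 1 and every integer k ≥ 1 there exists a constant C > 0 such that for every integer n ≥ 1, with ν_n = √n + 1/2, ∫_{−a}^{a} |y|^k e^{ν_n(1−y) − √n e^{−y}} dy ≤ C n^{−(k+1)/4}. -/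
open Real intervalIntegral

lemma aux_pow_le_exp (x : ℝ) (hx : 0 ≤ x) (k : ℕ) :
    x ^ k ≤ (k.factorial : ℝ) * Real.exp x := by
  have h := Real.sum_le_exp_of_nonneg hx (k + 1)
  have hterm : x ^ k / (k.factorial : ℝ) ≤
      ∑ i ∈ Finset.range (k + 1), x ^ i / (i.factorial : ℝ) :=
    Finset.single_le_sum (f := fun i => x ^ i / (i.factorial : ℝ))
      (fun i _ => by positivity) (Finset.self_mem_range_succ k)
  have hfac : (0:ℝ) < (k.factorial : ℝ) := by exact_mod_cast k.factorial_pos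
  have h2 : x ^ k / (k.factorial : ℝ) ≤ Real.exp x := hterm.trans h
  calc x ^ k = x ^ k / (k.factorial : ℝ) * (k.factorial : ℝ) := by field_simp
    _ ≤ Real.exp x * (k.factorial : ℝ) := by
        exact mul_le_mul_of_nonneg_right h2 hfac.le
    _ = (k.factorial : ℝ) * Real.exp x := by ring

lemma aux_key (a : ℝ) (ha : 1 < a) (y : ℝ) (hy : y ∈ Set.Icc (-a) a) :
    Real.exp (-a) / 4 * y ^ 2 ≤ Real.exp (-y) + y - 1 := by
  obtain ⟨hy1, hy2⟩ := hy
  have hea : Real.exp (-a) ≤ 1 := Real.exp_le_one_iff.mpr (by linarith)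
  rcases le_or_gt y 2 with h2 | h2
  · have h := Real.add_one_le_exp (-y / 2)
    have hsq : Real.exp (-y / 2) * Real.exp (-y / 2) = Real.exp (-y) := by
      rw [← Real.exp_add]; ring_nf
    nlinarith [Real.exp_pos (-y / 2), sq_nonneg y, sq_nonneg (y - 2)]
  · have h1 : Real.exp (-a) * Real.exp a = 1 := by rw [← Real.exp_add]; simp
    have hae : a * Real.exp (-a) ≤ 1 := by
      nlinarith [Real.add_one_le_exp a, Real.exp_pos (-a)]
    have h3 : Real.exp (-a) * y ≤ Real.exp (-a) * a :=
      mul_le_mul_of_nonneg_left hy2 (Real.exp_pos (-a)).le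
    nlinarith [Real.exp_pos (-y), Real.exp_pos (-a)]

lemma aux_alg (F c s p : ℝ) (hc : c ≠ 0) (hs : s ≠ 0) (k : ℕ) :
    F * (4 / (c * s)) ^ k * (p / (3 * (c * s) / 4))
      = F * 4 ^ k * (4 * p / 3) / c ^ (k + 1) * (s ^ (k + 1))⁻¹ := by
  field_simp
  have hck : c ^ k * c⁻¹ ^ k = 1 := by rw [← mul_pow, mul_inv_cancel₀ hc, one_pow]
  have hsk : s ^ k * s⁻¹ ^ k = 1 := by rw [← mul_pow, mul_inv_cancel₀ hs, one_pow]
  linear_combination (F * c * s * p * 4 ^ k) * (s ^ k * s⁻¹ ^ k * hck + hsk)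

/-- For every `a > 1` and integer `k ≥ 1` there is `C > 0` with
`∫_{-a}^{a} |y|^k e^{ν_n(1-y) - √n e^{-y}} dy ≤ C n^{-(k+1)/4}` for all `n ≥ 1`,
where `ν_n = √n + 1/2`. -/
theorem stmt_8 (a : ℝ) (ha : 1 < a) (k : ℕ) (hk : 1 ≤ k) :
    ∃ C : ℝ, 0 < C ∧ ∀ n : ℕ, 1 ≤ n →
      ∫ y in (-a)..a,
          |y| ^ k * Real.exp ((Real.sqrt n + 1 / 2) * (1 - y) - Real.sqrt n * Real.exp (-y))
        ≤ C * (n : ℝ) ^ (-((k : ℝ) + 1) / 4) := by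
  set c : ℝ := Real.exp (-a) / 4 with hc_def
  have hc : 0 < c := by positivity
  set K : ℝ := (k.factorial : ℝ) * 4 ^ k * (4 * π / 3) with hK_def
  have hK : 0 < K := by
    have := Real.pi_pos
    positivity
  set E : ℝ := Real.exp ((1 + a) / 2) with hE_def
  have hE : 0 < E := Real.exp_pos _
  refine ⟨E * Real.sqrt (K / c ^ (k + 1)), by positivity, ?_⟩
  intro n hn
  have hn0 : (0:ℝ) < (n : ℝ) := by exact_mod_cast hn
  set s : ℝ := Real.sqrt n with hs_def
  have hs0 : 0 < s := Real.sqrt_pos.mpr hn0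
  set b : ℝ := c * s with hb_def
  have hb : 0 < b := by positivity
  set d : ℝ := 3 * b / 4 with hd_def
  have hd : 0 < d := by positivity
  set S : ℝ := Real.sqrt ((k.factorial : ℝ) * (4 / b) ^ k) with hS_def
  have hS0 : 0 ≤ S := Real.sqrt_nonneg _
  -- pointwise bound
  have hpt : ∀ y ∈ Set.Icc (-a) a,
      |y| ^ k * Real.exp ((s + 1 / 2) * (1 - y) - s * Real.exp (-y))
        ≤ E * S * Real.exp (-d * y ^ 2) := by
    intro y hy
    have hkey : c * y ^ 2 ≤ Real.exp (-y) + y - 1 := aux_key a ha y hy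
    have h1 : (s + 1 / 2) * (1 - y) - s * Real.exp (-y) ≤ (1 + a) / 2 - b * y ^ 2 := by
      have hmul : s * (1 - y - Real.exp (-y)) ≤ s * (-(c * y ^ 2)) :=
        mul_le_mul_of_nonneg_left (by linarith) hs0.le
      have hident : (s + 1 / 2) * (1 - y) - s * Real.exp (-y)
          = s * (1 - y - Real.exp (-y)) + (1 - y) / 2 := by ring
      have hby : b * y ^ 2 = s * (c * y ^ 2) := by rw [hb_def]; ring
      have hy1 := hy.1
      rw [hident]; linarith
    have h2 : Real.exp ((s + 1 / 2) * (1 - y) - s * Real.exp (-y))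
        ≤ E * Real.exp (-b * y ^ 2) := by
      rw [hE_def, ← Real.exp_add]
      exact Real.exp_le_exp.mpr (by linarith)
    have h3 : |y| ^ k * Real.exp (-(b / 4) * y ^ 2) ≤ S := by
      have hbk : (0:ℝ) ≤ (4 / b) ^ k := pow_nonneg (div_nonneg (by norm_num) hb.le) k
      rw [hS_def, Real.le_sqrt (by positivity) (mul_nonneg (Nat.cast_nonneg _) hbk)]
      have hx : (0:ℝ) ≤ b / 4 * y ^ 2 := by positivity
      have h4 := aux_pow_le_exp (b / 4 * y ^ 2) hx k
      have hone : b / 4 * (4 / b) = 1 := by field_simp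
      have h5 : (y ^ 2) ^ k = (b / 4 * y ^ 2) ^ k * (4 / b) ^ k := by
        rw [← mul_pow]
        rw [show b / 4 * y ^ 2 * (4 / b) = b / 4 * (4 / b) * y ^ 2 by ring, hone, one_mul]
      have h6 : (y ^ 2) ^ k ≤ (k.factorial : ℝ) * (4 / b) ^ k * Real.exp (b / 4 * y ^ 2) := by
        rw [h5]
        have : (0:ℝ) ≤ (4 / b) ^ k := by positivity
        nlinarith [mul_le_mul_of_nonneg_right h4 this]
      have h7 : (|y| ^ k) ^ 2 = (y ^ 2) ^ k := by
        rw [← pow_mul, mul_comm, pow_mul, sq_abs]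
      have hsq : (|y| ^ k * Real.exp (-(b / 4) * y ^ 2)) ^ 2
          = (y ^ 2) ^ k * (Real.exp (-(b / 4) * y ^ 2) * Real.exp (-(b / 4) * y ^ 2)) := by
        rw [mul_pow, h7]; ring
      rw [hsq]
      have hle1 : Real.exp (-(b / 4) * y ^ 2) ≤ 1 :=
        Real.exp_le_one_iff.mpr (by nlinarith)
      have hep := (Real.exp_pos (-(b / 4) * y ^ 2)).le
      calc (y ^ 2) ^ k * (Real.exp (-(b / 4) * y ^ 2) * Real.exp (-(b / 4) * y ^ 2))
          ≤ ((k.factorial : ℝ) * (4 / b) ^ k * Real.exp (b / 4 * y ^ 2))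
            * (Real.exp (-(b / 4) * y ^ 2) * Real.exp (-(b / 4) * y ^ 2)) := by
            apply mul_le_mul_of_nonneg_right h6 (by positivity)
        _ = (k.factorial : ℝ) * (4 / b) ^ k
            * (Real.exp (b / 4 * y ^ 2) * Real.exp (-(b / 4) * y ^ 2)
              * Real.exp (-(b / 4) * y ^ 2)) := by ring
        _ = (k.factorial : ℝ) * (4 / b) ^ k * Real.exp (-(b / 4) * y ^ 2) := by
            rw [← Real.exp_add, show b / 4 * y ^ 2 + -(b / 4) * y ^ 2 = 0 by ring,
              Real.exp_zero, one_mul]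
        _ ≤ (k.factorial : ℝ) * (4 / b) ^ k * 1 := by
            apply mul_le_mul_of_nonneg_left hle1 (by positivity)
        _ = (k.factorial : ℝ) * (4 / b) ^ k := by ring
    -- combine
    have hsplit : Real.exp (-b * y ^ 2)
        = Real.exp (-(b / 4) * y ^ 2) * Real.exp (-d * y ^ 2) := by
      rw [← Real.exp_add, hd_def]; ring_nf
    have habsk : (0:ℝ) ≤ |y| ^ k := by positivity
    calc |y| ^ k * Real.exp ((s + 1 / 2) * (1 - y) - s * Real.exp (-y))
        ≤ |y| ^ k * (E * Real.exp (-b * y ^ 2)) := mul_le_mul_of_nonneg_left h2 habsk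
      _ = E * (|y| ^ k * Real.exp (-(b / 4) * y ^ 2)) * Real.exp (-d * y ^ 2) := by
          rw [hsplit]; ring
      _ ≤ E * S * Real.exp (-d * y ^ 2) := by
          apply mul_le_mul_of_nonneg_right _ (Real.exp_pos _).le
          exact mul_le_mul_of_nonneg_left h3 hE.le
  -- integrability
  have hcont1 : Continuous fun y : ℝ =>
      |y| ^ k * Real.exp ((s + 1 / 2) * (1 - y) - s * Real.exp (-y)) := by
    fun_prop
  have hcont2 : Continuous fun y : ℝ => E * S * Real.exp (-d * y ^ 2) := by fun_prop
  have haa : -a ≤ a := by linarith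
  have hi1 : IntervalIntegrable
      (fun y : ℝ => |y| ^ k * Real.exp ((s + 1 / 2) * (1 - y) - s * Real.exp (-y)))
      MeasureTheory.volume (-a) a := hcont1.intervalIntegrable (-a) a
  have hi2 : IntervalIntegrable (fun y : ℝ => E * S * Real.exp (-d * y ^ 2))
      MeasureTheory.volume (-a) a := hcont2.intervalIntegrable (-a) a
  have hmono := intervalIntegral.integral_mono_on haa hi1 hi2 hpt
  -- bound the gaussian integral
  have hig : MeasureTheory.Integrable (fun y : ℝ => Real.exp (-d * y ^ 2)) :=
    integrable_exp_neg_mul_sq hd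
  have hgauss : ∫ y in (-a)..a, Real.exp (-d * y ^ 2) ≤ Real.sqrt (π / d) := by
    rw [intervalIntegral.integral_of_le haa]
    calc ∫ y in Set.Ioc (-a) a, Real.exp (-d * y ^ 2)
        ≤ ∫ y : ℝ, Real.exp (-d * y ^ 2) :=
          MeasureTheory.setIntegral_le_integral hig
            (Filter.Eventually.of_forall fun x => (Real.exp_pos _).le)
      _ = Real.sqrt (π / d) := integral_gaussian d
  have hstep : ∫ y in (-a)..a, E * S * Real.exp (-d * y ^ 2) ≤ E * S * Real.sqrt (π / d) := by
    rw [intervalIntegral.integral_const_mul]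
    exact mul_le_mul_of_nonneg_left hgauss (by positivity)
  -- final arithmetic: E * S * √(π/d) = C * n^(-(k+1)/4)
  have hsk : s ^ (k + 1) = (n : ℝ) ^ (((k : ℝ) + 1) / 2) := by
    rw [hs_def, Real.sqrt_eq_rpow, ← Real.rpow_natCast ((n : ℝ) ^ (1 / (2:ℝ))) (k + 1),
      ← Real.rpow_mul hn0.le]
    push_cast
    congr 1
    ring
  have hY : (0:ℝ) < (n : ℝ) ^ (-((k : ℝ) + 1) / 4) := Real.rpow_pos_of_pos hn0 _
  have hYsq : ((n : ℝ) ^ (-((k : ℝ) + 1) / 4)) ^ 2 = ((n : ℝ) ^ (((k : ℝ) + 1) / 2))⁻¹ := by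
    rw [← Real.rpow_natCast ((n : ℝ) ^ (-((k : ℝ) + 1) / 4)) 2, ← Real.rpow_mul hn0.le,
      ← Real.rpow_neg hn0.le]
    congr 1
    push_cast
    ring
  have harg : (k.factorial : ℝ) * (4 / b) ^ k * (π / d)
      = K / c ^ (k + 1) * ((n : ℝ) ^ (-((k : ℝ) + 1) / 4)) ^ 2 := by
    rw [hYsq, ← hsk, hK_def, hd_def, hb_def]
    exact aux_alg _ _ _ _ hc.ne' hs0.ne' k
  have hfinal : S * Real.sqrt (π / d) = Real.sqrt (K / c ^ (k + 1)) * (n : ℝ) ^ (-((k : ℝ) + 1) / 4) := by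
    rw [hS_def, ← Real.sqrt_mul (by positivity) (π / d), harg,
      Real.sqrt_mul (by positivity) _, Real.sqrt_sq hY.le]
  calc ∫ y in (-a)..a,
        |y| ^ k * Real.exp ((s + 1 / 2) * (1 - y) - s * Real.exp (-y))
      ≤ ∫ y in (-a)..a, E * S * Real.exp (-d * y ^ 2) := hmono
    _ ≤ E * S * Real.sqrt (π / d) := hstep
    _ = E * Real.sqrt (K / c ^ (k + 1)) * (n : ℝ) ^ (-((k : ℝ) + 1) / 4) := by
        rw [mul_assoc, hfinal]; ring
end

section
/- For every real a > 1 and every c > 0 there exist constants C > 0, c₂ > 0 and an integer n₀ ≥ 1 such that for every integer n ≥ n₀, with ν_n = √n + 1/2, ∫_{a}^{∞} e^{c y} e^{ν_n(1−y) − √n e^{−y}} dy ≤ C ν_n^{−1} e^{−c₂ ν_n (a−1)}. -/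
open MeasureTheory Real

lemma my_integral_exp_neg_mul_Ioi {b : ℝ} (hb : 0 < b) (a : ℝ) :
    ∫ x in Set.Ioi a, Real.exp (-b * x) = Real.exp (-b * a) / b := by
  have h := MeasureTheory.integral_Ioi_of_hasDerivAt_of_tendsto
    (f := fun x => -Real.exp (-b * x) / b) (f' := fun x => Real.exp (-b * x)) (a := a) (m := 0)
    ?_ ?_ (exp_neg_integrableOn_Ioi a hb) ?_
  · rw [h]; ring
  · exact (Continuous.continuousWithinAt (by continuity))
  · intro x _
    have : HasDerivAt (fun x => -Real.exp (-b * x) / b) (Real.exp (-b * x)) x := by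
      have h1 : HasDerivAt (fun x : ℝ => -b * x) (-b) x := by
        simpa using (hasDerivAt_id x).const_mul (-b)
      have h2 := h1.exp
      have h3 := (h2.neg).div_const b
      refine h3.congr_deriv ?_
      field_simp [hb.ne']
    exact this
  · have : Filter.Tendsto (fun x : ℝ => Real.exp (-b * x)) Filter.atTop (nhds 0) :=
      Real.tendsto_exp_atBot.comp (Filter.tendsto_id.const_mul_atTop_of_neg (by linarith))
    simpa using (this.neg.div_const b)

/-- For every `a > 1`, `c > 0` there are `C > 0`, `c₂ > 0` and `n₀ ≥ 1`
such that for all `n ≥ n₀`, with `ν_n = √n + 1/2`,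
`∫_a^∞ e^{cy} e^{ν_n(1-y) - √n e^{-y}} dy ≤ C ν_n⁻¹ e^{-c₂ ν_n (a-1)}`. -/
theorem stmt_9 (a c : ℝ) (ha : 1 < a) (hc : 0 < c) :
    ∃ (C c₂ : ℝ) (n₀ : ℕ), 0 < C ∧ 0 < c₂ ∧ 1 ≤ n₀ ∧ ∀ n : ℕ, n₀ ≤ n →
      ∫ y in Set.Ioi a,
          Real.exp (c * y)
            * Real.exp ((Real.sqrt n + 1 / 2) * (1 - y) - Real.sqrt n * Real.exp (-y))
        ≤ C * (Real.sqrt n + 1 / 2)⁻¹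
            * Real.exp (-c₂ * (Real.sqrt n + 1 / 2) * (a - 1)) := by
  refine ⟨2 * Real.exp c, 1 / 2, max 1 ⌈4 * c ^ 2⌉₊, by positivity, by norm_num,
    le_max_left _ _, fun n hn => ?_⟩
  set ν : ℝ := Real.sqrt n + 1 / 2 with hν
  have hsq : 2 * c ≤ Real.sqrt n := by
    rw [show (2 * c) = Real.sqrt ((2*c)^2) from (Real.sqrt_sq (by positivity)).symm]
    apply Real.sqrt_le_sqrt
    have h1 : (⌈4 * c ^ 2⌉₊ : ℕ) ≤ n := le_trans (le_max_right _ _) hn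
    have h2 : 4 * c ^ 2 ≤ (⌈4 * c ^ 2⌉₊ : ℝ) := Nat.le_ceil _
    have : (⌈4 * c ^ 2⌉₊ : ℝ) ≤ (n : ℝ) := by exact_mod_cast h1
    nlinarith
  have hν0 : (0 : ℝ) < ν := by
    have := Real.sqrt_nonneg (n : ℝ); rw [hν]; linarith
  have hνc : 2 * c ≤ ν := by rw [hν]; linarith
  have hb : 0 < ν - c := by linarith
  -- pointwise bound
  have hmono : ∀ y : ℝ, Real.exp (c * y) * Real.exp (ν * (1 - y) - Real.sqrt n * Real.exp (-y))
      ≤ Real.exp ν * Real.exp (-(ν - c) * y) := by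
    intro y
    rw [← Real.exp_add, ← Real.exp_add]
    apply Real.exp_le_exp.mpr
    have h1 : 0 ≤ Real.sqrt n * Real.exp (-y) :=
      mul_nonneg (Real.sqrt_nonneg _) (Real.exp_pos _).le
    nlinarith
  have hint : IntegrableOn (fun y => Real.exp ν * Real.exp (-(ν - c) * y)) (Set.Ioi a) :=
    (exp_neg_integrableOn_Ioi a hb).const_mul _
  have hle : (∫ y in Set.Ioi a,
      Real.exp (c * y) * Real.exp (ν * (1 - y) - Real.sqrt n * Real.exp (-y)))
      ≤ ∫ y in Set.Ioi a, Real.exp ν * Real.exp (-(ν - c) * y) := by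
    apply MeasureTheory.integral_mono_of_nonneg
    · filter_upwards with y; positivity
    · exact hint
    · filter_upwards with y; exact hmono y
  have hval : (∫ y in Set.Ioi a, Real.exp ν * Real.exp (-(ν - c) * y))
      = Real.exp ν * (Real.exp (-(ν - c) * a) / (ν - c)) := by
    rw [integral_const_mul, my_integral_exp_neg_mul_Ioi hb]
  refine le_trans hle ?_
  rw [hval]
  have key : Real.exp ν * Real.exp (-(ν - c) * a) = Real.exp c * Real.exp (-(ν - c) * (a - 1)) := by
    rw [← Real.exp_add, ← Real.exp_add]; ring_nf
  rw [← mul_div_assoc, key]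
  have hE : Real.exp (-(ν - c) * (a - 1)) ≤ Real.exp (-(1/2) * ν * (a - 1)) := by
    apply Real.exp_le_exp.mpr
    nlinarith
  have hB : (1 : ℝ) / (ν - c) ≤ 2 / ν := by
    rw [div_le_div_iff₀ hb hν0]; linarith
  calc Real.exp c * Real.exp (-(ν - c) * (a - 1)) / (ν - c)
      ≤ Real.exp c * Real.exp (-(1/2) * ν * (a - 1)) * (2 / ν) := by
        rw [div_eq_mul_one_div]
        apply mul_le_mul (by
          apply mul_le_mul_of_nonneg_left hE (Real.exp_pos _).le) hB
          (by positivity) (by positivity)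
    _ = 2 * Real.exp c * ν⁻¹ * Real.exp (-(1/2) * ν * (a - 1)) := by
        field_simp
end

section
/- For every real a > 1 and every c > 0 there exist constants C > 0, c₃ > 0 and an integer n₀ ≥ 1 such that for every integer n ≥ n₀, with ν_n = √n + 1/2, ∫_{−∞}^{−a} e^{c|y|} e^{ν_n(1−y) − √n e^{−y}} dy ≤ C ν_n^{−1} e^{−c₃ ν_n e^{a}}. -/
open MeasureTheory Real

/-- Auxiliary: integrability of `y ↦ exp (ν * (y - b))` on `Iic b` when `1 ≤ ν`. -/
lemma aux_integrableOn_exp_lin {ν b : ℝ} (hν : 1 ≤ ν) :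
    IntegrableOn (fun y : ℝ => Real.exp (ν * (y - b))) (Set.Iic b) := by
  have hg : IntegrableOn (fun y : ℝ => Real.exp y * Real.exp (-b)) (Set.Iic b) :=
    (integrableOn_exp_Iic b).mul_const _
  refine hg.mono' ?_ ?_
  · exact (Real.continuous_exp.comp (continuous_const.mul (continuous_id.sub continuous_const))).aestronglyMeasurable
  · filter_upwards [MeasureTheory.ae_restrict_mem measurableSet_Iic] with y hy
    rw [Real.norm_eq_abs, abs_of_pos (Real.exp_pos _), ← Real.exp_add]
    apply Real.exp_le_exp.2
    have hyb : y - b ≤ 0 := sub_nonpos.2 hy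
    nlinarith

/-- Auxiliary: the value of the integral. -/
lemma aux_integral_exp_lin {ν b : ℝ} (hν : 1 ≤ ν) :
    ∫ y in Set.Iic b, Real.exp (ν * (y - b)) = ν⁻¹ := by
  have hν0 : (0:ℝ) < ν := lt_of_lt_of_le one_pos hν
  have hderiv : ∀ x ∈ Set.Iic b,
      HasDerivAt (fun y : ℝ => ν⁻¹ * Real.exp (ν * (y - b)))
        (Real.exp (ν * (x - b))) x := by
    intro x _
    have h1 : HasDerivAt (fun y : ℝ => ν * (y - b)) ν x := by
      simpa using ((hasDerivAt_id x).sub_const b).const_mul ν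
    have h2 := (h1.exp).const_mul ν⁻¹
    convert h2 using 1
    case e'_9 => rw [mul_comm _ ν, ← mul_assoc, inv_mul_cancel₀ hν0.ne', one_mul]
    all_goals rfl
  have htends : Filter.Tendsto (fun y : ℝ => ν⁻¹ * Real.exp (ν * (y - b)))
      Filter.atBot (nhds 0) := by
    have h0 : Filter.Tendsto (fun y : ℝ => y - b) Filter.atBot Filter.atBot := by
      simpa [sub_eq_add_neg] using
        Filter.tendsto_atBot_add_const_right Filter.atBot (-b) Filter.tendsto_id
    have h1 : Filter.Tendsto (fun y : ℝ => ν * (y - b)) Filter.atBot Filter.atBot :=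
      h0.const_mul_atBot hν0
    have := (Real.tendsto_exp_atBot.comp h1).const_mul ν⁻¹
    simpa using this
  have := integral_Iic_of_hasDerivAt_of_tendsto' hderiv (aux_integrableOn_exp_lin hν) htends
  rw [this]
  simp

/-- For every `a > 1`, `c > 0` there are `C > 0`, `c₃ > 0` and `n₀ ≥ 1`
such that for all `n ≥ n₀`, with `ν_n = √n + 1/2`,
`∫_{-∞}^{-a} e^{c|y|} e^{ν_n(1-y) - √n e^{-y}} dy ≤ C ν_n⁻¹ e^{-c₃ ν_n e^a}`. -/
theorem stmt_10 (a c : ℝ) (ha : 1 < a) (hc : 0 < c) :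
    ∃ (C c₃ : ℝ) (n₀ : ℕ), 0 < C ∧ 0 < c₃ ∧ 1 ≤ n₀ ∧ ∀ n : ℕ, n₀ ≤ n →
      ∫ y in Set.Iio (-a),
          Real.exp (c * |y|)
            * Real.exp ((Real.sqrt n + 1 / 2) * (1 - y) - Real.sqrt n * Real.exp (-y))
        ≤ C * (Real.sqrt n + 1 / 2)⁻¹
            * Real.exp (-c₃ * (Real.sqrt n + 1 / 2) * Real.exp a) := by
  set E : ℝ := Real.exp a with hE
  have ha0 : (0:ℝ) < a := lt_trans one_pos ha
  have hE1a : 1 + a < E := by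
    have := Real.add_one_lt_exp (x := a) (by positivity)
    rw [hE]; linarith
  have hE2 : (2:ℝ) < E := by
    have h1 : Real.exp 1 ≤ E := by
      rw [hE]; exact Real.exp_le_exp.2 ha.le
    have := Real.add_one_le_exp (1:ℝ)
    linarith
  have hEpos : (0:ℝ) < E := by linarith
  set c₃ : ℝ := (E - 1 - a) / (2 * E) with hc₃def
  have hc₃pos : 0 < c₃ := by
    apply div_pos <;> linarith
  set M : ℝ := max ((2*c*a + E)/(E - 1 - a)) ((c + E/2)/(E - 2)) with hM
  clear_value M
  refine ⟨1, c₃, max 1 ⌈M^2⌉₊, one_pos, hc₃pos, le_max_left _ _, ?_⟩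
  intro n hn
  have hn1 : 1 ≤ n := le_trans (le_max_left _ _) hn
  have hsq1 : 1 ≤ Real.sqrt n := by
    rw [show (1:ℝ) = Real.sqrt 1 by simp]
    exact Real.sqrt_le_sqrt (by exact_mod_cast hn1)
  set ν : ℝ := Real.sqrt n + 1/2 with hν
  clear_value ν
  have hν1 : 1 ≤ ν := by rw [hν]; linarith
  have hν0 : 0 < ν := lt_of_lt_of_le one_pos hν1
  -- ν ≥ M
  have hνM : M ≤ ν := by
    have h1 : (⌈M^2⌉₊ : ℝ) ≤ (n:ℝ) := by
      exact_mod_cast le_trans (le_max_right 1 ⌈M^2⌉₊) hn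
    have h2 : M^2 ≤ (n:ℝ) := le_trans (Nat.le_ceil _) h1
    have h3 : M ≤ Real.sqrt n := by
      rcases le_or_gt M 0 with hM0 | hM0
      · exact le_trans hM0 (Real.sqrt_nonneg _)
      · calc M = Real.sqrt (M^2) := by rw [Real.sqrt_sq hM0.le]
          _ ≤ Real.sqrt n := Real.sqrt_le_sqrt h2
    rw [hν]; linarith
  rw [hM] at hνM
  have hcond1 : 2*c*a + E ≤ ν * (E - 1 - a) := by
    have h : (2*c*a + E)/(E - 1 - a) ≤ ν := le_trans (le_max_left _ _) hνM
    rw [div_le_iff₀ (by linarith : (0:ℝ) < E - 1 - a)] at h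
    linarith [h]
  have hcond2 : c + E/2 ≤ ν * (E - 2) := by
    have h : (c + E/2)/(E - 2) ≤ ν := le_trans (le_max_right _ _) hνM
    rw [div_le_iff₀ (by linarith : (0:ℝ) < E - 2)] at h
    linarith [h]
  -- pointwise bound
  have hpoint : ∀ y ∈ Set.Iio (-a),
      Real.exp (c * |y|) * Real.exp (ν * (1 - y) - Real.sqrt n * Real.exp (-y))
        ≤ Real.exp (-c₃ * ν * E) * Real.exp (ν * (y - (-a))) := by
    intro y hy
    have hy' : y < -a := hy
    have habs : |y| = -y := abs_of_neg (by linarith)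
    rw [← Real.exp_add, ← Real.exp_add]
    apply Real.exp_le_exp.2
    set s : ℝ := -y - a with hs
    clear_value s
    have hs0 : 0 ≤ s := by rw [hs]; linarith
    -- exp(-y) = E * exp s ≥ E * (1 + s)
    have hexp : E * (1 + s) ≤ Real.exp (-y) := by
      have h1 : Real.exp (-y) = E * Real.exp s := by
        rw [hE, ← Real.exp_add]; congr 1; rw [hs]; ring
      rw [h1]
      exact mul_le_mul_of_nonneg_left (by linarith [Real.add_one_le_exp s]) hEpos.le
    have hsqnn : (0:ℝ) ≤ Real.sqrt n := Real.sqrt_nonneg _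
    have hkey : Real.sqrt n * (E * (1 + s)) ≤ Real.sqrt n * Real.exp (-y) :=
      mul_le_mul_of_nonneg_left hexp hsqnn
    have hsqν : Real.sqrt n = ν - 1/2 := by rw [hν]; ring
    have hc₃E : c₃ * E = (E - 1 - a) / 2 := by
      rw [hc₃def]; field_simp
    -- target: c*(-y) + (ν*(1-y) - √n exp(-y)) ≤ -c₃ ν E + ν(y+a)
    rw [habs]
    have expand : c * (-y) + (ν * (1 - y) - Real.sqrt n * Real.exp (-y))
        ≤ c*(a+s) + ν*(1+a+s) - (ν - 1/2) * (E * (1+s)) := by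
      have e1 : c * (-y) = c * (a + s) := by rw [hs]; ring
      have e2 : ν * (1 - y) = ν * (1 + a + s) := by rw [hs]; ring
      rw [e1, e2, hsqν]
      rw [hsqν] at hkey
      linarith [hkey]
    have final : c*(a+s) + ν*(1+a+s) - (ν - 1/2) * (E * (1+s))
        ≤ -c₃ * ν * E + ν * (y - (-a)) := by
      have hys : y - (-a) = -s := by rw [hs]; ring
      rw [hys]
      have hcE2 : c₃ * ν * E = (ν*E - ν - ν*a)/2 := by
        rw [hc₃def]; field_simp
      have hrw : -c₃ * ν * E = -((ν*E - ν - ν*a)/2) := by rw [← hcE2]; ring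
      rw [hrw]
      have h1 := mul_le_mul_of_nonneg_right hcond2 hs0
      nlinarith [hcond1, h1, hs0]
    linarith [expand, final]
  -- the dominating function and its integral
  have hgint : IntegrableOn (fun y : ℝ =>
      Real.exp (-c₃ * ν * E) * Real.exp (ν * (y - (-a)))) (Set.Iio (-a)) := by
    exact IntegrableOn.mono_set ((aux_integrableOn_exp_lin hν1).const_mul _)
      Set.Iio_subset_Iic_self
  have hfmeas : AEStronglyMeasurable (fun y : ℝ =>
      Real.exp (c * |y|) * Real.exp (ν * (1 - y) - Real.sqrt n * Real.exp (-y)))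
      (volume.restrict (Set.Iio (-a))) := by
    apply Continuous.aestronglyMeasurable
    exact (Real.continuous_exp.comp (continuous_const.mul continuous_abs)).mul
      (Real.continuous_exp.comp ((continuous_const.mul
        (continuous_const.sub continuous_id)).sub
        (continuous_const.mul (Real.continuous_exp.comp continuous_neg))))
  have hfint : IntegrableOn (fun y : ℝ =>
      Real.exp (c * |y|) * Real.exp (ν * (1 - y) - Real.sqrt n * Real.exp (-y)))
      (Set.Iio (-a)) := by
    refine hgint.mono' hfmeas ?_
    filter_upwards [MeasureTheory.ae_restrict_mem measurableSet_Iio] with y hy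
    rw [Real.norm_eq_abs, abs_of_pos (by positivity)]
    exact hpoint y hy
  calc ∫ y in Set.Iio (-a),
        Real.exp (c * |y|) * Real.exp (ν * (1 - y) - Real.sqrt n * Real.exp (-y))
      ≤ ∫ y in Set.Iio (-a),
          Real.exp (-c₃ * ν * E) * Real.exp (ν * (y - (-a))) :=
        setIntegral_mono_on hfint hgint measurableSet_Iio hpoint
    _ = Real.exp (-c₃ * ν * E) * ∫ y in Set.Iio (-a), Real.exp (ν * (y - (-a))) := by
        rw [integral_const_mul]
    _ = Real.exp (-c₃ * ν * E) * ν⁻¹ := by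
        rw [← integral_Iic_eq_integral_Iio, aux_integral_exp_lin hν1]
    _ = 1 * ν⁻¹ * Real.exp (-c₃ * ν * E) := by ring
end

section
/- Fix an integer n ≥ 1, let X_n have the Gamma distribution of shape √n + 1/2 and rate 1, and let m_n denote the law of u_n = −log X_n + (1/2) log n. Then for every continuously differentiable f : ℝ → ℝ such that f and f' have at most polynomial growth, ∫ (1 + 1/(2√n) − e^{−y}) f(y) m_n(dy) = n^{−1/2} ∫ f'(y) m_n(dy). (This is the integration-by-parts formula: the left integrand equals W̄(y) = W(y) − E[W], where W(y) = 1 − e^{−y}.) -/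
open MeasureTheory ProbabilityTheory Real Set Filter Topology
open scoped ENNReal NNReal

lemma base_contOn (s : ℝ) (r : ℕ) :
    ContinuousOn (fun x : ℝ => x ^ (s - 1) * Real.exp (-x) * (1 + |Real.log x|) ^ r)
      (Set.Ioi 0) := by
  apply ContinuousOn.mul
  · apply ContinuousOn.mul
    · exact fun x hx =>
        (Real.continuousAt_rpow_const x _ (Or.inl (ne_of_gt hx))).continuousWithinAt
    · exact (Real.continuous_exp.comp continuous_neg).continuousOn
  · exact ((continuousOn_const.add ((Real.continuousOn_log.mono (by
      intro x hx; exact ne_of_gt hx)).abs)).pow r)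

lemma base_integrable (s : ℝ) (hs : 0 < s) (r : ℕ) :
    IntegrableOn (fun x : ℝ => x ^ (s - 1) * Real.exp (-x) * (1 + |Real.log x|) ^ r)
      (Set.Ioi 0) := by
  set ε : ℝ := s / (2 * (r + 1)) with hεdef
  have hε0 : 0 < ε := by positivity
  have hrε : (r : ℝ) * ε ≤ s / 2 := by
    rw [hεdef, mul_div_assoc']
    rw [div_le_div_iff₀ (by positivity) (by norm_num)]
    nlinarith [hs.le, (Nat.cast_nonneg r : (0:ℝ) ≤ r)]
  have hsplit : Set.Ioi (0:ℝ) = Set.Ioc 0 1 ∪ Set.Ioi 1 :=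
    (Set.Ioc_union_Ioi_eq_Ioi zero_le_one).symm
  rw [hsplit, integrableOn_union]
  constructor
  · have hexp : (-1:ℝ) < s - 1 - r * ε := by linarith
    have hint : IntegrableOn (fun x : ℝ => x ^ (s - 1 - r * ε)) (Set.Ioc (0:ℝ) 1) := by
      have := intervalIntegral.intervalIntegrable_rpow' (a := 0) (b := 1) hexp
      rwa [intervalIntegrable_iff_integrableOn_Ioc_of_le zero_le_one] at this
    refine Integrable.mono' (hint.const_mul ((1 + 1/ε) ^ r))
      (((base_contOn s r).mono (by rw [hsplit]; exact Set.subset_union_left)).aestronglyMeasurable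
        measurableSet_Ioc) ?_
    rw [ae_restrict_iff' measurableSet_Ioc]
    filter_upwards with x hx
    obtain ⟨hx0, hx1⟩ := hx
    have hxε : 0 < x ^ (-ε) := Real.rpow_pos_of_pos hx0 _
    have hlog : |Real.log x| ≤ (1/ε) * x ^ (-ε) := by
      rw [abs_of_nonpos (Real.log_nonpos hx0.le hx1)]
      have h1 : Real.log (x ^ (-ε)) = -ε * Real.log x := Real.log_rpow hx0 _
      have h2 : Real.log (x ^ (-ε)) ≤ x ^ (-ε) - 1 :=
        Real.log_le_sub_one_of_pos hxε
      rw [h1] at h2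
      have h4 : -ε * Real.log x ≤ x ^ (-ε) := by linarith
      calc -Real.log x = (-ε * Real.log x) / ε := by field_simp
        _ ≤ x ^ (-ε) / ε := by gcongr
        _ = (1/ε) * x ^ (-ε) := by ring
    have hxneg : (1:ℝ) ≤ x ^ (-ε) := by
      rw [Real.rpow_neg hx0.le]
      exact (one_le_inv₀ (Real.rpow_pos_of_pos hx0 ε)).mpr (Real.rpow_le_one hx0.le hx1 hε0.le)
    have hb : (1 + |Real.log x|) ≤ (1 + 1/ε) * x ^ (-ε) := by nlinarith
    have hpow : (1 + |Real.log x|) ^ r ≤ ((1 + 1/ε) * x ^ (-ε)) ^ r :=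
      pow_le_pow_left₀ (by positivity) hb r
    have hexpx : Real.exp (-x) ≤ 1 := by
      rw [← Real.exp_zero]; exact Real.exp_le_exp.mpr (by linarith)
    have e1 : (x ^ (-ε)) ^ r = x ^ (-ε * r) := by
      rw [← Real.rpow_natCast (x ^ (-ε)) r, ← Real.rpow_mul hx0.le]
    have e2 : x ^ (s - 1) * x ^ (-ε * r) = x ^ (s - 1 - r * ε) := by
      rw [← Real.rpow_add hx0]; ring_nf
    calc ‖x ^ (s - 1) * Real.exp (-x) * (1 + |Real.log x|) ^ r‖
        = x ^ (s - 1) * Real.exp (-x) * (1 + |Real.log x|) ^ r := by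
          rw [Real.norm_eq_abs, abs_of_nonneg (by positivity)]
      _ ≤ x ^ (s - 1) * 1 * ((1 + 1/ε) * x ^ (-ε)) ^ r := by
          apply mul_le_mul (by
            apply mul_le_mul_of_nonneg_left hexpx (by positivity)) hpow (by positivity)
            (by positivity)
      _ = (1 + 1/ε) ^ r * x ^ (s - 1 - r * ε) := by
          rw [mul_one, mul_pow, e1, ← e2]; ring
  · have hint2 : IntegrableOn (fun x : ℝ => Real.exp (-x) * x ^ (s + r - 1)) (Set.Ioi 1) :=
      (Real.GammaIntegral_convergent (by positivity : (0:ℝ) < s + r)).mono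
        (Set.Ioi_subset_Ioi zero_le_one) le_rfl
    refine Integrable.mono' hint2
      (((base_contOn s r).mono (by rw [hsplit]; exact Set.subset_union_right)).aestronglyMeasurable
        measurableSet_Ioi) ?_
    rw [ae_restrict_iff' measurableSet_Ioi]
    filter_upwards with x hx
    have hx0 : (0:ℝ) < x := lt_trans one_pos hx
    have h1 : 1 + |Real.log x| ≤ x := by
      rw [abs_of_nonneg (Real.log_nonneg hx.le)]
      nlinarith [Real.log_le_sub_one_of_pos hx0]
    have h2 : (1 + |Real.log x|) ^ r ≤ x ^ (r : ℝ) := by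
      rw [Real.rpow_natCast]; exact pow_le_pow_left₀ (by positivity) h1 r
    calc ‖x ^ (s - 1) * Real.exp (-x) * (1 + |Real.log x|) ^ r‖
        = x ^ (s - 1) * Real.exp (-x) * (1 + |Real.log x|) ^ r := by
          rw [Real.norm_eq_abs, abs_of_nonneg (by positivity)]
      _ ≤ x ^ (s - 1) * Real.exp (-x) * x ^ (r : ℝ) := by
          apply mul_le_mul_of_nonneg_left h2 (by positivity)
      _ = Real.exp (-x) * x ^ (s + r - 1) := by
          rw [show s + (r : ℝ) - 1 = (s - 1) + r by ring, Real.rpow_add hx0]; ring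

lemma master_integrable (s : ℝ) (hs : 0 < s) (r : ℕ) :
    IntegrableOn (fun x : ℝ => x ^ (s - 1) * Real.exp (-x) * (1 + x) * (1 + |Real.log x|) ^ r)
      (Set.Ioi 0) := by
  have h1 := base_integrable s hs r
  have h2 := base_integrable (s + 1) (by linarith) r
  apply Integrable.congr (h1.add h2)
  filter_upwards [self_mem_ae_restrict measurableSet_Ioi] with x hx
  have hx0 : (0:ℝ) < x := hx
  have e : x ^ (s + 1 - 1) = x ^ (s - 1) * x := by
    rw [show s + 1 - 1 = s - 1 + 1 by ring, Real.rpow_add_one hx0.ne']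
  simp only [Pi.add_apply, e]
  ring

lemma tendsto_poly_exp (b : ℝ) (hb : 0 < b) (p : ℕ) :
    Filter.Tendsto (fun t : ℝ => (1 + |t|) ^ p * Real.exp (-(b * t))) Filter.atTop (nhds 0) := by
  have h := tendsto_rpow_mul_exp_neg_mul_atTop_nhds_zero p b hb
  have hcomp := h.comp (tendsto_atTop_add_const_right Filter.atTop 1 Filter.tendsto_id)
  have h2 := hcomp.const_mul (Real.exp b)
  rw [mul_zero] at h2
  apply h2.congr'
  filter_upwards [Filter.eventually_ge_atTop (0:ℝ)] with t ht
  simp only [Function.comp, id]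
  rw [abs_of_nonneg ht, Real.rpow_natCast, add_comm 1 t,
    show (-b) * (t + 1) = -b + -(b * t) by ring, Real.exp_add]
  have hb1 : Real.exp b * Real.exp (-b) = 1 := by rw [← Real.exp_add]; simp
  linear_combination (t + 1) ^ p * Real.exp (-(b * t)) * hb1

lemma gamma_ibp (ν c K₁ K₂ : ℝ) (r : ℕ) (hν : 1 < ν) (hK₁ : 0 ≤ K₁) (hK₂ : 0 ≤ K₂)
    (f : ℝ → ℝ) (hf : ContDiff ℝ 1 f)
    (hb1 : ∀ x : ℝ, |f (-Real.log x + c)| ≤ K₁ * (1 + |Real.log x|) ^ r)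
    (hb2 : ∀ x : ℝ, |deriv f (-Real.log x + c)| ≤ K₂ * (1 + |Real.log x|) ^ r) :
    ∫ x in Set.Ioi (0:ℝ), x ^ (ν - 1) * Real.exp (-x) * ((ν - x) * f (-Real.log x + c))
      = ∫ x in Set.Ioi (0:ℝ), x ^ (ν - 1) * Real.exp (-x) * deriv f (-Real.log x + c) := by
  have hν0 : (0:ℝ) < ν := lt_trans one_pos hν
  set G₁ : ℝ → ℝ := fun x => x ^ (ν - 1) * Real.exp (-x) * ((ν - x) * f (-Real.log x + c))
    with hG₁
  set G₂ : ℝ → ℝ := fun x => x ^ (ν - 1) * Real.exp (-x) * deriv f (-Real.log x + c) with hG₂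
  set G : ℝ → ℝ := fun x =>
    x ^ (ν - 1) * Real.exp (-x) *
      ((ν - x) * f (-Real.log x + c) - deriv f (-Real.log x + c)) with hGdef
  set F : ℝ → ℝ := fun x => x ^ ν * (Real.exp (-x) * f (-Real.log x + c)) with hFdef
  -- continuity facts
  have hfc : Continuous f := hf.continuous
  have hf'c : Continuous (deriv f) := hf.continuous_deriv le_rfl
  have hrpow_cont : ContinuousOn (fun x : ℝ => x ^ (ν - 1)) (Set.Ioi 0) := fun x hx =>
    (Real.continuousAt_rpow_const x _ (Or.inl (ne_of_gt hx))).continuousWithinAt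
  have hlog_cont : ContinuousOn Real.log (Set.Ioi (0:ℝ)) :=
    Real.continuousOn_log.mono (fun x hx => by simpa using (ne_of_gt hx))
  have hycont : ContinuousOn (fun x : ℝ => -Real.log x + c) (Set.Ioi 0) :=
    hlog_cont.neg.add continuousOn_const
  have hexp_cont : ContinuousOn (fun x : ℝ => Real.exp (-x)) (Set.Ioi 0) :=
    (Real.continuous_exp.comp continuous_neg).continuousOn
  have hD_cont : ContinuousOn (fun x : ℝ => x ^ (ν - 1) * Real.exp (-x)) (Set.Ioi 0) :=
    hrpow_cont.mul hexp_cont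
  have hG₁cont : ContinuousOn G₁ (Set.Ioi 0) :=
    hD_cont.mul ((continuousOn_const.sub continuousOn_id).mul (hfc.comp_continuousOn hycont))
  have hG₂cont : ContinuousOn G₂ (Set.Ioi 0) :=
    hD_cont.mul (hf'c.comp_continuousOn hycont)
  have hGcont : ContinuousOn G (Set.Ioi 0) :=
    hD_cont.mul (((continuousOn_const.sub continuousOn_id).mul
      (hfc.comp_continuousOn hycont)).sub (hf'c.comp_continuousOn hycont))
  -- integrability
  have hintG₁ : IntegrableOn G₁ (Set.Ioi 0) := by
    refine Integrable.mono' ((master_integrable ν hν0 r).const_mul (ν * K₁))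
      (hG₁cont.aestronglyMeasurable measurableSet_Ioi) ?_
    rw [ae_restrict_iff' measurableSet_Ioi]
    filter_upwards with x hx
    have hx0 : (0:ℝ) < x := hx
    have h1 : |ν - x| ≤ ν * (1 + x) := by
      rw [abs_le]; constructor <;> nlinarith
    have hDnn : (0:ℝ) ≤ x ^ (ν - 1) * Real.exp (-x) := by positivity
    calc ‖G₁ x‖ = x ^ (ν - 1) * Real.exp (-x) * |(ν - x) * f (-Real.log x + c)| := by
          rw [hG₁, Real.norm_eq_abs, abs_mul, abs_mul,
            abs_of_nonneg (by positivity : (0:ℝ) ≤ x ^ (ν - 1)),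
            abs_of_nonneg (Real.exp_nonneg _)]
      _ ≤ x ^ (ν - 1) * Real.exp (-x) * (ν * (1 + x) * (K₁ * (1 + |Real.log x|) ^ r)) := by
          apply mul_le_mul_of_nonneg_left _ hDnn
          rw [abs_mul]
          exact mul_le_mul h1 (hb1 x) (abs_nonneg _) (by positivity)
      _ = (ν * K₁) * (x ^ (ν - 1) * Real.exp (-x) * (1 + x) * (1 + |Real.log x|) ^ r) := by ring
  have hintG₂ : IntegrableOn G₂ (Set.Ioi 0) := by
    refine Integrable.mono' ((base_integrable ν hν0 r).const_mul K₂)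
      (hG₂cont.aestronglyMeasurable measurableSet_Ioi) ?_
    rw [ae_restrict_iff' measurableSet_Ioi]
    filter_upwards with x hx
    have hx0 : (0:ℝ) < x := hx
    have hDnn : (0:ℝ) ≤ x ^ (ν - 1) * Real.exp (-x) := by positivity
    calc ‖G₂ x‖ = x ^ (ν - 1) * Real.exp (-x) * |deriv f (-Real.log x + c)| := by
          rw [hG₂, Real.norm_eq_abs, abs_mul, abs_mul,
            abs_of_nonneg (by positivity : (0:ℝ) ≤ x ^ (ν - 1)),
            abs_of_nonneg (Real.exp_nonneg _)]
      _ ≤ x ^ (ν - 1) * Real.exp (-x) * (K₂ * (1 + |Real.log x|) ^ r) :=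
          mul_le_mul_of_nonneg_left (hb2 x) hDnn
      _ = K₂ * (x ^ (ν - 1) * Real.exp (-x) * (1 + |Real.log x|) ^ r) := by ring
  have hGsplit : ∀ x, G x = G₁ x - G₂ x := fun x => by rw [hGdef, hG₁, hG₂]; ring
  have hintG : IntegrableOn G (Set.Ioi 0) := by
    apply (hintG₁.sub hintG₂).congr
    exact Filter.Eventually.of_forall (fun x => (hGsplit x).symm)
  -- derivative
  have hderiv : ∀ x ∈ Set.Ioi (0:ℝ), HasDerivAt F (G x) x := by
    intro x hx
    have hx0 : (0:ℝ) < x := hx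
    have h1 : HasDerivAt (fun t : ℝ => t ^ ν) (ν * x ^ (ν - 1)) x :=
      Real.hasDerivAt_rpow_const (Or.inl hx0.ne')
    have h2 : HasDerivAt (fun t : ℝ => Real.exp (-t)) (-Real.exp (-x)) x := by
      simpa using (hasDerivAt_neg x).exp
    have hyd : HasDerivAt (fun t : ℝ => -Real.log t + c) (-x⁻¹) x :=
      ((Real.hasDerivAt_log hx0.ne').neg).add_const c
    have h3 : HasDerivAt (fun t : ℝ => f (-Real.log t + c))
        (deriv f (-Real.log x + c) * -x⁻¹) x :=
      ((hf.differentiable one_ne_zero (-Real.log x + c)).hasDerivAt).comp x hyd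
    have h4 := h1.mul (h2.mul h3)
    refine h4.congr_deriv ?_
    symm
    simp only [Pi.mul_apply]
    rw [hGdef]
    have hxν : x ^ ν = x ^ (ν - 1) * x := by
      rw [← Real.rpow_add_one hx0.ne' (ν - 1)]; ring_nf
    rw [hxν]
    field_simp
    ring
  -- tendsto at infinity
  have htop : Filter.Tendsto F Filter.atTop (nhds 0) := by
    apply squeeze_zero_norm' (a := fun x : ℝ => K₁ * (x ^ (ν + r) * Real.exp (-(1 * x))))
    · filter_upwards [Filter.eventually_ge_atTop (1:ℝ)] with x hx1
      have hx0 : (0:ℝ) < x := lt_of_lt_of_le one_pos hx1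
      have hL : 1 + |Real.log x| ≤ x := by
        rw [abs_of_nonneg (Real.log_nonneg hx1)]
        nlinarith [Real.log_le_sub_one_of_pos hx0]
      have h2 : (1 + |Real.log x|) ^ r ≤ x ^ (r : ℝ) := by
        rw [Real.rpow_natCast]; exact pow_le_pow_left₀ (by positivity) hL r
      calc ‖F x‖ = x ^ ν * (Real.exp (-x) * |f (-Real.log x + c)|) := by
            rw [hFdef, Real.norm_eq_abs, abs_mul, abs_mul,
              abs_of_nonneg (by positivity : (0:ℝ) ≤ x ^ ν),
              abs_of_nonneg (Real.exp_nonneg _)]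
        _ ≤ x ^ ν * (Real.exp (-x) * (K₁ * (1 + |Real.log x|) ^ r)) := by
            apply mul_le_mul_of_nonneg_left _ (by positivity)
            exact mul_le_mul_of_nonneg_left (hb1 x) (Real.exp_nonneg _)
        _ ≤ x ^ ν * (Real.exp (-x) * (K₁ * x ^ (r : ℝ))) := by
            apply mul_le_mul_of_nonneg_left _ (by positivity)
            apply mul_le_mul_of_nonneg_left _ (Real.exp_nonneg _)
            exact mul_le_mul_of_nonneg_left h2 hK₁
        _ = K₁ * (x ^ (ν + r) * Real.exp (-(1 * x))) := by
            rw [Real.rpow_add hx0, one_mul]; ring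
    · have := (tendsto_rpow_mul_exp_neg_mul_atTop_nhds_zero (ν + r) 1 one_pos).const_mul K₁
      simpa using this
  -- continuity within at 0
  have hF0 : F 0 = 0 := by
    rw [hFdef]; simp [Real.zero_rpow hν0.ne']
  have hcw : ContinuousWithinAt F (Set.Ici 0) 0 := by
    have hIci : Set.Ici (0:ℝ) = Set.Ioi 0 ∪ {0} := Set.Ioi_union_left.symm
    unfold ContinuousWithinAt
    rw [hF0, hIci, nhdsWithin_union, nhdsWithin_singleton, Filter.tendsto_sup]
    constructor
    · apply squeeze_zero_norm' (a := fun x : ℝ => K₁ * (x ^ ν * (1 + |Real.log x|) ^ r))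
      · filter_upwards [self_mem_nhdsWithin] with x hx
        have hx0 : (0:ℝ) < x := hx
        have hexp1 : Real.exp (-x) ≤ 1 := by
          rw [← Real.exp_zero]; exact Real.exp_le_exp.mpr (by linarith)
        calc ‖F x‖ = x ^ ν * (Real.exp (-x) * |f (-Real.log x + c)|) := by
              rw [hFdef, Real.norm_eq_abs, abs_mul, abs_mul,
                abs_of_nonneg (by positivity : (0:ℝ) ≤ x ^ ν),
                abs_of_nonneg (Real.exp_nonneg _)]
          _ ≤ x ^ ν * (1 * (K₁ * (1 + |Real.log x|) ^ r)) := by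
              apply mul_le_mul_of_nonneg_left _ (by positivity)
              exact mul_le_mul hexp1 (hb1 x) (abs_nonneg _) zero_le_one
          _ = K₁ * (x ^ ν * (1 + |Real.log x|) ^ r) := by ring
      · have hneglog : Filter.Tendsto (fun x : ℝ => -Real.log x) (nhdsWithin 0 (Set.Ioi 0))
            Filter.atTop :=
          tendsto_neg_atBot_atTop.comp Real.tendsto_log_nhdsGT_zero
        have hcomp := (tendsto_poly_exp ν hν0 r).comp hneglog
        have hc2 := hcomp.const_mul K₁
        rw [mul_zero] at hc2
        apply hc2.congr'
        filter_upwards [self_mem_nhdsWithin] with x hx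
        have hx0 : (0:ℝ) < x := hx
        simp only [Function.comp]
        rw [abs_neg, show -(ν * -Real.log x) = Real.log x * ν by ring,
          ← Real.rpow_def_of_pos hx0]
        ring
    · simpa [hF0] using tendsto_pure_nhds F 0
  have hFTC := integral_Ioi_of_hasDerivAt_of_tendsto hcw hderiv hintG htop
  rw [hF0, sub_zero] at hFTC
  have hsplitInt : ∫ x in Set.Ioi (0:ℝ), G x
      = (∫ x in Set.Ioi (0:ℝ), G₁ x) - ∫ x in Set.Ioi (0:ℝ), G₂ x := by
    rw [← integral_sub hintG₁ hintG₂]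
    exact integral_congr_ae (Filter.Eventually.of_forall hGsplit)
  have : (∫ x in Set.Ioi (0:ℝ), G₁ x) - ∫ x in Set.Ioi (0:ℝ), G₂ x = 0 := by
    rw [← hsplitInt, hFTC]
  linarith

/-- Integration-by-parts formula for the law `m_n` of
`u_n = -log X_n + (1/2) log n`, `X_n ~ Gamma(√n + 1/2, 1)`: for every continuously
differentiable `f` such that `f` and `f'` have at most polynomial growth,
`∫ (1 + 1/(2√n) - e^{-y}) f(y) m_n(dy) = n^{-1/2} ∫ f'(y) m_n(dy)`. -/
theorem stmt_15 (n : ℕ) (hn : 1 ≤ n) (f : ℝ → ℝ) (hf : ContDiff ℝ 1 f)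
    (hfgrowth : ∃ (Cf : ℝ) (p : ℕ), ∀ x : ℝ, |f x| ≤ Cf * (1 + |x|) ^ p)
    (hf'growth : ∃ (Cf : ℝ) (p : ℕ), ∀ x : ℝ, |deriv f x| ≤ Cf * (1 + |x|) ^ p) :
    ∫ y, (1 + 1 / (2 * Real.sqrt n) - Real.exp (-y)) * f y
        ∂(Measure.map (fun x => -Real.log x + (1 / 2) * Real.log n)
            (gammaMeasure (Real.sqrt n + 1 / 2) 1))
      = (n : ℝ) ^ (-(1 : ℝ) / 2) *
        ∫ y, deriv f y
          ∂(Measure.map (fun x => -Real.log x + (1 / 2) * Real.log n)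
              (gammaMeasure (Real.sqrt n + 1 / 2) 1)) := by
  have hn0 : (0:ℝ) < n := by exact_mod_cast Nat.lt_of_lt_of_le Nat.zero_lt_one hn
  have hsn1 : (1:ℝ) ≤ Real.sqrt n := by
    rw [show (1:ℝ) = Real.sqrt 1 by simp]
    exact Real.sqrt_le_sqrt (by exact_mod_cast hn)
  have hsn0 : (0:ℝ) < Real.sqrt n := lt_of_lt_of_le one_pos hsn1
  set ν : ℝ := Real.sqrt n + 1/2 with hνdef
  set c : ℝ := (1/2 : ℝ) * Real.log n with hcdef
  have hν1 : (1:ℝ) < ν := by rw [hνdef]; linarith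
  have hν0 : (0:ℝ) < ν := lt_trans one_pos hν1
  obtain ⟨Cf, p, hCf⟩ := hfgrowth
  obtain ⟨Cg, q, hCg⟩ := hf'growth
  set r : ℕ := max p q with hrdef
  set K₁ : ℝ := max Cf 0 * (1 + |c|) ^ p with hK₁def
  set K₂ : ℝ := max Cg 0 * (1 + |c|) ^ q with hK₂def
  have hK₁0 : 0 ≤ K₁ := mul_nonneg (le_max_right _ _) (by positivity)
  have hK₂0 : 0 ≤ K₂ := mul_nonneg (le_max_right _ _) (by positivity)
  -- generic growth bound transfer
  have key_bound : ∀ (g : ℝ → ℝ) (C : ℝ) (m : ℕ), (∀ t, |g t| ≤ C * (1 + |t|) ^ m) → m ≤ r →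
      ∀ x : ℝ, |g (-Real.log x + c)| ≤ (max C 0 * (1 + |c|) ^ m) * (1 + |Real.log x|) ^ r := by
    intro g C m hg hmr x
    have h1 : |(-Real.log x + c)| ≤ |Real.log x| + |c| :=
      (abs_add_le _ _).trans (by rw [abs_neg])
    have h2 : 1 + |(-Real.log x + c)| ≤ (1 + |c|) * (1 + |Real.log x|) := by
      nlinarith [abs_nonneg (Real.log x), abs_nonneg c]
    have h3 : (1 + |(-Real.log x + c)|) ^ m ≤ ((1 + |c|) * (1 + |Real.log x|)) ^ m :=
      pow_le_pow_left₀ (by positivity) h2 m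
    have h5 : (1 + |Real.log x|) ^ m ≤ (1 + |Real.log x|) ^ r :=
      pow_le_pow_right₀ (by nlinarith [abs_nonneg (Real.log x)]) hmr
    calc |g (-Real.log x + c)| ≤ C * (1 + |(-Real.log x + c)|) ^ m := hg _
      _ ≤ max C 0 * (1 + |(-Real.log x + c)|) ^ m :=
          mul_le_mul_of_nonneg_right (le_max_left _ _) (by positivity)
      _ ≤ max C 0 * ((1 + |c|) ^ m * (1 + |Real.log x|) ^ m) := by
          rw [← mul_pow]
          exact mul_le_mul_of_nonneg_left h3 (le_max_right _ _)
      _ ≤ (max C 0 * (1 + |c|) ^ m) * (1 + |Real.log x|) ^ r := by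
          rw [mul_assoc]
          exact mul_le_mul_of_nonneg_left
            (mul_le_mul_of_nonneg_left h5 (by positivity)) (le_max_right _ _)
  have hb1 : ∀ x : ℝ, |f (-Real.log x + c)| ≤ K₁ * (1 + |Real.log x|) ^ r :=
    key_bound f Cf p hCf (le_max_left _ _)
  have hb2 : ∀ x : ℝ, |deriv f (-Real.log x + c)| ≤ K₂ * (1 + |Real.log x|) ^ r :=
    key_bound (deriv f) Cg q hCg (le_max_right _ _)
  -- Step A : unfold the map
  have hymeas : Measurable (fun x : ℝ => -Real.log x + c) :=
    Real.measurable_log.neg.add_const c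
  have hcont1 : Continuous (fun u : ℝ => (1 + 1 / (2 * Real.sqrt n) - Real.exp (-u)) * f u) :=
    ((continuous_const.sub (Real.continuous_exp.comp continuous_neg)).mul hf.continuous)
  have hcont2 : Continuous (deriv f) := hf.continuous_deriv le_rfl
  rw [MeasureTheory.integral_map hymeas.aemeasurable hcont1.aestronglyMeasurable,
    MeasureTheory.integral_map hymeas.aemeasurable hcont2.aestronglyMeasurable]
  -- Step B : gamma measure as density
  have hpdf0 : ∀ x : ℝ, x ∉ Set.Ioi (0:ℝ) → gammaPDFReal ν 1 x = 0 := by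
    intro x hx
    have hx' : x ≤ 0 := le_of_not_gt (by simpa [Set.mem_Ioi] using hx)
    by_cases h0 : 0 ≤ x
    · have hx0 : x = 0 := le_antisymm hx' h0
      rw [hx0, gammaPDFReal, if_pos le_rfl, Real.zero_rpow (by linarith : ν - 1 ≠ 0)]
      ring
    · rw [gammaPDFReal, if_neg h0]
  have key : ∀ g : ℝ → ℝ, ∫ x, g x ∂(gammaMeasure ν 1)
      = ∫ x in Set.Ioi 0, gammaPDFReal ν 1 x * g x := by
    intro g
    rw [gammaMeasure]
    have hd : gammaPDF ν 1 = (fun x : ℝ => ((gammaPDFReal ν 1 x).toNNReal : ℝ≥0∞)) := rfl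
    rw [hd, integral_withDensity_eq_integral_smul
      ((measurable_gammaPDFReal ν 1).real_toNNReal) g]
    rw [show (fun x => (gammaPDFReal ν 1 x).toNNReal • g x)
        = fun x => gammaPDFReal ν 1 x * g x from funext fun x => by
      rw [NNReal.smul_def, Real.coe_toNNReal _ (gammaPDFReal_nonneg hν0 one_pos x),
        smul_eq_mul]]
    exact (setIntegral_eq_integral_of_forall_compl_eq_zero
      (fun x hx => by rw [hpdf0 x hx, zero_mul])).symm
  rw [key, key]
  -- Step C : simplify integrands on (0, ∞)
  have hexpc : Real.exp c = Real.sqrt n := by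
    rw [hcdef, Real.sqrt_eq_rpow, Real.rpow_def_of_pos hn0]
    ring_nf
  have hnhalf : (n : ℝ) ^ (-(1:ℝ)/2) = (Real.sqrt n)⁻¹ := by
    rw [show (-(1:ℝ)/2) = -(1/2) by ring, Real.rpow_neg hn0.le, Real.sqrt_eq_rpow]
  have hL : ∀ x ∈ Set.Ioi (0:ℝ),
      gammaPDFReal ν 1 x * ((1 + 1 / (2 * Real.sqrt n) - Real.exp (-(-Real.log x + c)))
        * f (-Real.log x + c))
      = ((Real.Gamma ν)⁻¹ * (Real.sqrt n)⁻¹)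
          * (x ^ (ν - 1) * Real.exp (-x) * ((ν - x) * f (-Real.log x + c))) := by
    intro x hx
    have hx0 : (0:ℝ) < x := hx
    have hpdf : gammaPDFReal ν 1 x = (Real.Gamma ν)⁻¹ * (x ^ (ν - 1) * Real.exp (-x)) := by
      rw [gammaPDFReal, if_pos hx0.le, Real.one_rpow, one_mul]
      ring_nf
    have hexp : Real.exp (-(-Real.log x + c)) = x * (Real.sqrt n)⁻¹ := by
      rw [show -(-Real.log x + c) = Real.log x + -c by ring, Real.exp_add,
        Real.exp_log hx0, Real.exp_neg, hexpc]
    rw [hpdf, hexp]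
    have hfac : 1 + 1 / (2 * Real.sqrt n) - x * (Real.sqrt n)⁻¹
        = (Real.sqrt n)⁻¹ * (ν - x) := by
      rw [hνdef]
      field_simp
    rw [hfac]
    ring
  have hR : ∀ x ∈ Set.Ioi (0:ℝ),
      gammaPDFReal ν 1 x * deriv f (-Real.log x + c)
      = (Real.Gamma ν)⁻¹ * (x ^ (ν - 1) * Real.exp (-x) * deriv f (-Real.log x + c)) := by
    intro x hx
    have hx0 : (0:ℝ) < x := hx
    have hpdf : gammaPDFReal ν 1 x = (Real.Gamma ν)⁻¹ * (x ^ (ν - 1) * Real.exp (-x)) := by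
      rw [gammaPDFReal, if_pos hx0.le, Real.one_rpow, one_mul]
      ring_nf
    rw [hpdf]
    ring
  rw [setIntegral_congr_fun measurableSet_Ioi (fun x hx => hL x hx),
    setIntegral_congr_fun measurableSet_Ioi (fun x hx => hR x hx),
    integral_const_mul, integral_const_mul]
  rw [gamma_ibp ν c K₁ K₂ r hν1 hK₁0 hK₂0 f hf hb1 hb2, hnhalf]
  ring
end

section
/- Let l ≥ 1 be an integer and let (Y_j)_{j∈ℤ} be real square-integrable random variables with E[Y_j] = 0 for all j, such that Y_j and Y_k are independent whenever |j − k| ≥ l. Then for every finitely supported φ : ℤ → ℝ, E[(Σ_{j∈ℤ} Y_j φ_j)²] ≤ l Σ_{j∈ℤ} E[Y_j²] φ_j². -/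
set_option maxHeartbeats 1600000


open MeasureTheory ProbabilityTheory

/-- If `(Y_j)_{j∈ℤ}` are centered square-integrable random variables such
that `Y_j` and `Y_k` are independent whenever `|j - k| ≥ l`, then for every finitely
supported `φ : ℤ → ℝ`, `E[(Σ_j Y_j φ_j)²] ≤ l Σ_j E[Y_j²] φ_j²`. -/
theorem stmt_17 {Ω : Type*} [MeasurableSpace Ω] (μ : Measure Ω) [IsProbabilityMeasure μ]
    (l : ℕ) (hl : 1 ≤ l) (Y : ℤ → Ω → ℝ)
    (hmeas : ∀ j, Measurable (Y j))
    (hL2 : ∀ j, MemLp (Y j) 2 μ)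
    (hmean : ∀ j, ∫ ω, Y j ω ∂μ = 0)
    (hindep : ∀ j k : ℤ, (l : ℤ) ≤ |j - k| → IndepFun (Y j) (Y k) μ)
    (φ : ℤ → ℝ) (hφ : (Function.support φ).Finite) :
    ∫ ω, (∑ᶠ j : ℤ, Y j ω * φ j) ^ 2 ∂μ
      ≤ (l : ℝ) * ∑ᶠ j : ℤ, (∫ ω, (Y j ω) ^ 2 ∂μ) * φ j ^ 2 := by
  classical
  have hl0 : (l : ℤ) ≠ 0 := by positivity
  set s := hφ.toFinset with hs
  have h1 : ∀ ω, (∑ᶠ j : ℤ, Y j ω * φ j) = ∑ j ∈ s, Y j ω * φ j := by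
    intro ω
    apply finsum_eq_finset_sum_of_support_subset
    intro j hj
    simp only [Function.mem_support] at hj
    simp only [hs, Set.Finite.coe_toFinset, Function.mem_support]
    intro h; exact hj (by rw [h, mul_zero])
  have h2 : (∑ᶠ j : ℤ, (∫ ω, (Y j ω) ^ 2 ∂μ) * φ j ^ 2)
      = ∑ j ∈ s, (∫ ω, (Y j ω) ^ 2 ∂μ) * φ j ^ 2 := by
    apply finsum_eq_finset_sum_of_support_subset
    intro j hj
    simp only [Function.mem_support] at hj
    simp only [hs, Set.Finite.coe_toFinset, Function.mem_support]
    intro h; exact hj (by rw [h]; ring)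
  set g : ℤ → ℕ := fun j => (j % (l : ℤ)).toNat with hg
  have hgmap : ∀ j ∈ s, g j ∈ Finset.range l := by
    intro j _
    simp only [Finset.mem_range, hg]
    have h1' : 0 ≤ j % (l : ℤ) := Int.emod_nonneg j hl0
    have h2' : j % (l : ℤ) < l := Int.emod_lt_of_pos j (by exact_mod_cast hl)
    omega
  set T : ℕ → Ω → ℝ := fun r ω => ∑ j ∈ s.filter (fun j => g j = r), Y j ω * φ j with hT
  have hmul : ∀ j : ℤ, MemLp (fun ω => Y j ω * φ j) 2 μ := fun j =>
    MemLp.ae_eq (ae_of_all μ fun ω => mul_comm (φ j) (Y j ω)) ((hL2 j).const_mul (φ j))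
  have hmemT : ∀ r, MemLp (T r) 2 μ := by
    intro r
    exact memLp_finset_sum _ fun j _ => hmul j
  have hind : ∀ r : ℕ, ∀ j ∈ s.filter (fun j => g j = r), ∀ k ∈ s.filter (fun j => g j = r),
      j ≠ k → IndepFun (Y j) (Y k) μ := by
    intro r j hj k hk hjk
    apply hindep
    have e1 : (j % (l : ℤ)).toNat = r := (Finset.mem_filter.1 hj).2
    have e2 : (k % (l : ℤ)).toNat = r := (Finset.mem_filter.1 hk).2
    have n1 : 0 ≤ j % (l : ℤ) := Int.emod_nonneg j hl0
    have n2 : 0 ≤ k % (l : ℤ) := Int.emod_nonneg k hl0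
    have hmod : j % (l : ℤ) = k % (l : ℤ) := by omega
    have hdvd : (l : ℤ) ∣ j - k := Int.ModEq.dvd hmod.symm
    exact Int.le_of_dvd (abs_pos.mpr (sub_ne_zero.2 hjk)) ((dvd_abs _ _).mpr hdvd)
  have hint : ∀ r : ℕ, ∀ j ∈ s.filter (fun j => g j = r), ∀ k ∈ s.filter (fun j => g j = r),
      Integrable (fun ω => (Y j ω * φ j) * (Y k ω * φ k)) μ := by
    intro r j hj k hk
    have hbase : Integrable (fun ω => Y j ω * Y k ω) μ := by
      rcases eq_or_ne j k with rfl | hjk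
      · have := (hL2 j).integrable_sq
        exact this.congr (ae_of_all μ fun ω => by ring)
      · exact (hind r j hj k hk hjk).integrable_mul ((hL2 j).integrable one_le_two)
          ((hL2 k).integrable one_le_two)
    exact (hbase.mul_const (φ j * φ k)).congr (ae_of_all μ fun ω => by ring)
  have hTint : ∀ r : ℕ, ∫ ω, (T r ω) ^ 2 ∂μ
      = ∑ j ∈ s.filter (fun j => g j = r), (∫ ω, (Y j ω) ^ 2 ∂μ) * φ j ^ 2 := by
    intro r
    have hzero : ∀ j ∈ s.filter (fun j => g j = r), ∀ k ∈ s.filter (fun j => g j = r),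
        k ≠ j → ∫ ω, (Y j ω * φ j) * (Y k ω * φ k) ∂μ = 0 := by
      intro j hj k hk hkj
      have hi := hind r j hj k hk (Ne.symm hkj)
      have hm : ∫ ω, Y j ω * Y k ω ∂μ = 0 := by
        have h := hi.integral_mul_eq_mul_integral (hL2 j).1
          (hL2 k).1
        have h' : ∫ ω, Y j ω * Y k ω ∂μ = (∫ ω, Y j ω ∂μ) * ∫ ω, Y k ω ∂μ := h
        rw [h', hmean j, hmean k, mul_zero]
      calc ∫ ω, (Y j ω * φ j) * (Y k ω * φ k) ∂μ
          = ∫ ω, (Y j ω * Y k ω) * (φ j * φ k) ∂μ := by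
            congr 1; funext ω; ring
        _ = (∫ ω, Y j ω * Y k ω ∂μ) * (φ j * φ k) := integral_mul_const _ _
        _ = 0 := by rw [hm, zero_mul]
    calc ∫ ω, (T r ω) ^ 2 ∂μ
        = ∫ ω, ∑ j ∈ s.filter (fun j => g j = r), ∑ k ∈ s.filter (fun j => g j = r),
            (Y j ω * φ j) * (Y k ω * φ k) ∂μ := by
          congr 1; funext ω
          rw [sq, hT]
          exact Finset.sum_mul_sum _ _ _ _
      _ = ∑ j ∈ s.filter (fun j => g j = r), ∑ k ∈ s.filter (fun j => g j = r),
            ∫ ω, (Y j ω * φ j) * (Y k ω * φ k) ∂μ := by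
          rw [integral_finset_sum _ fun j hj => integrable_finset_sum _ fun k hk => hint r j hj k hk]
          exact Finset.sum_congr rfl fun j hj =>
            integral_finset_sum _ fun k hk => hint r j hj k hk
      _ = ∑ j ∈ s.filter (fun j => g j = r), (∫ ω, (Y j ω) ^ 2 ∂μ) * φ j ^ 2 := by
          refine Finset.sum_congr rfl fun j hj => ?_
          rw [Finset.sum_eq_single_of_mem j hj (fun k hk hkj => hzero j hj k hk hkj)]
          calc ∫ ω, (Y j ω * φ j) * (Y j ω * φ j) ∂μ
              = ∫ ω, (Y j ω) ^ 2 * φ j ^ 2 ∂μ := by congr 1; funext ω; ring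
            _ = _ := integral_mul_const _ _
  have hfib : ∀ ω, ∑ j ∈ s, Y j ω * φ j = ∑ r ∈ Finset.range l, T r ω := fun ω =>
    (Finset.sum_fiberwise_of_maps_to hgmap _).symm
  have hpt : ∀ ω, (∑ j ∈ s, Y j ω * φ j) ^ 2 ≤ (l : ℝ) * ∑ r ∈ Finset.range l, (T r ω) ^ 2 := by
    intro ω
    rw [hfib ω]
    have := sq_sum_le_card_mul_sum_sq (s := Finset.range l) (f := fun r => T r ω)
    simpa [Finset.card_range] using this
  have hSint : Integrable (fun ω => (∑ j ∈ s, Y j ω * φ j) ^ 2) μ :=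
    (memLp_finset_sum _ fun j _ => hmul j).integrable_sq
  have hRint : Integrable (fun ω => (l : ℝ) * ∑ r ∈ Finset.range l, (T r ω) ^ 2) μ :=
    (integrable_finset_sum _ fun r _ => (hmemT r).integrable_sq).const_mul _
  simp only [h1, h2]
  calc ∫ ω, (∑ j ∈ s, Y j ω * φ j) ^ 2 ∂μ
      ≤ ∫ ω, (l : ℝ) * ∑ r ∈ Finset.range l, (T r ω) ^ 2 ∂μ :=
        integral_mono hSint hRint hpt
    _ = (l : ℝ) * ∑ r ∈ Finset.range l, ∫ ω, (T r ω) ^ 2 ∂μ := by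
        rw [integral_const_mul, integral_finset_sum _ fun r _ => (hmemT r).integrable_sq]
    _ = (l : ℝ) * ∑ j ∈ s, (∫ ω, (Y j ω) ^ 2 ∂μ) * φ j ^ 2 := by
        congr 1
        rw [← Finset.sum_fiberwise_of_maps_to hgmap fun j => (∫ ω, (Y j ω) ^ 2 ∂μ) * φ j ^ 2]
        exact Finset.sum_congr rfl fun r _ => hTint r
end
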